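/- arXiv:2408.02388 — 4 statements merged into one kernel-verified Lean document; each statement's English description precedes it below -/
import Mathlib

section
/- Let C be a hereditary class of finite simple graphs, closed under isomorphism, that is well-quasi-ordered by the induced-subgraph (embedding) relation, i.e., there is no infinite family of members of C that pairwise do not embed into one another. Then C has the extension preservation property: every first-order sentence in the language of graphs that is preserved by embeddings over C is equivalent over C to an existential sentence. -/
open FirstOrder Language

/-- Satisfaction of a first-order sentence in the language of graphs by a simple graph. -/
def GSat {V : Type} (G : SimpleGraph V) (φ : Language.graph.Sentence) : Prop :=
  @Sentence.Realize Language.graph V G.structure φ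

/-- A sentence is existential if it has the form `∃ x₁ … xₙ θ` with `θ` quantifier-free. -/
def IsExistentialSentence {L : Language} (ψ : L.Sentence) : Prop :=
  ∃ (n : ℕ) (θ : L.BoundedFormula Empty n), θ.IsQF ∧ ψ = θ.exs

namespace StmtAux

open FirstOrder Language BoundedFormula

/-- A graph isomorphism yields a first-order equivalence of the associated structures. -/
noncomputable def isoEquiv {V W : Type} {G : SimpleGraph V} {H : SimpleGraph W} (e : G ≃g H) :
    @Language.Equiv Language.graph V W G.structure H.structure :=
  letI := G.structure
  letI := H.structure
  { toEquiv := e.toEquiv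
    map_fun' := fun f _ => isEmptyElim f
    map_rel' := by
      intro n r x
      cases r
      exact e.map_adj_iff }

theorem gsat_iso {V W : Type} {G : SimpleGraph V} {H : SimpleGraph W} (e : G ≃g H)
    (φ : Language.graph.Sentence) : GSat G φ ↔ GSat H φ :=
  letI := G.structure
  letI := H.structure
  StrongHomClass.realize_sentence (isoEquiv e) φ

theorem exists_fin_copy {V : Type} (G : SimpleGraph V) [Finite V] :
    ∃ (n : ℕ) (G' : SimpleGraph (Fin n)), Nonempty (G ≃g G') := by
  have := Fintype.ofFinite V
  exact ⟨Fintype.card V, G.map (Fintype.equivFin V).toEmbedding,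
    ⟨SimpleGraph.Iso.map (Fintype.equivFin V) G⟩⟩

@[simp] theorem relMap_adj {V : Type} (H : SimpleGraph V) (x : Fin 2 → V) :
    @Structure.RelMap Language.graph V H.structure 2 adj x ↔ H.Adj (x 0) (x 1) := Iff.rfl

open scoped Classical in
/-- One clause of the "embedding" matrix. -/
noncomputable def clause {n N : ℕ} (h : n ≤ N) (G : SimpleGraph (Fin n)) (p : Fin n × Fin n) :
    Language.graph.BoundedFormula Empty N :=
  if p.1 = p.2 then ⊤
  else
    (∼((Term.var (Sum.inr (Fin.castLE h p.1))).bdEqual (Term.var (Sum.inr (Fin.castLE h p.2))))) ⊓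
      (if G.Adj p.1 p.2 then
        adj.boundedFormula₂ (Term.var (Sum.inr (Fin.castLE h p.1)))
          (Term.var (Sum.inr (Fin.castLE h p.2)))
      else
        ∼(adj.boundedFormula₂ (Term.var (Sum.inr (Fin.castLE h p.1)))
          (Term.var (Sum.inr (Fin.castLE h p.2)))))

theorem clause_isQF {n N : ℕ} (h : n ≤ N) (G : SimpleGraph (Fin n)) (p : Fin n × Fin n) :
    (clause h G p).IsQF := by
  unfold clause
  split_ifs
  · exact IsQF.top
  · exact ((IsAtomic.equal _ _).isQF.not).inf (IsAtomic.rel _ _).isQF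
  · exact ((IsAtomic.equal _ _).isQF.not).inf (IsAtomic.rel _ _).isQF.not

theorem isQF_foldr_inf {L : Language} {α : Type} {n : ℕ}
    (l : List (L.BoundedFormula α n)) (h : ∀ φ ∈ l, φ.IsQF) :
    (l.foldr (· ⊓ ·) ⊤).IsQF := by
  induction l with
  | nil => exact IsQF.top
  | cons a l ih =>
    exact (h a List.mem_cons_self).inf (ih fun φ hφ => h φ (List.mem_cons_of_mem _ hφ))

theorem isQF_foldr_sup {L : Language} {α : Type} {n : ℕ}
    (l : List (L.BoundedFormula α n)) (h : ∀ φ ∈ l, φ.IsQF) :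
    (l.foldr (· ⊔ ·) ⊥).IsQF := by
  induction l with
  | nil => exact isQF_bot
  | cons a l ih =>
    exact (h a List.mem_cons_self).sup (ih fun φ hφ => h φ (List.mem_cons_of_mem _ hφ))

theorem isQF_iInf {L : Language} {α β : Type} {n : ℕ} [Finite β]
    (f : β → L.BoundedFormula α n) (h : ∀ b, (f b).IsQF) : (iInf f).IsQF := by
  unfold BoundedFormula.iInf
  apply isQF_foldr_inf
  intro φ hφ
  rcases List.mem_map.1 hφ with ⟨b, _, rfl⟩
  exact h b

theorem isQF_iSup {L : Language} {α β : Type} {n : ℕ} [Finite β]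
    (f : β → L.BoundedFormula α n) (h : ∀ b, (f b).IsQF) : (iSup f).IsQF := by
  unfold BoundedFormula.iSup
  apply isQF_foldr_sup
  intro φ hφ
  rcases List.mem_map.1 hφ with ⟨b, _, rfl⟩
  exact h b

/-- The quantifier-free matrix expressing that a copy of `G` sits on the first `n` of `N`
variables. -/
noncomputable def matrixOf {n N : ℕ} (h : n ≤ N) (G : SimpleGraph (Fin n)) :
    Language.graph.BoundedFormula Empty N :=
  iInf (clause h G)

theorem matrixOf_isQF {n N : ℕ} (h : n ≤ N) (G : SimpleGraph (Fin n)) :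
    (matrixOf h G).IsQF :=
  isQF_iInf _ (clause_isQF h G)

theorem realize_clause {V : Type} (H : SimpleGraph V) {n N : ℕ} (h : n ≤ N)
    (G : SimpleGraph (Fin n)) (v : Empty → V) (xs : Fin N → V) (p : Fin n × Fin n) :
    @BoundedFormula.Realize Language.graph V H.structure Empty N (clause h G p) v xs ↔
      (p.1 ≠ p.2 → xs (Fin.castLE h p.1) ≠ xs (Fin.castLE h p.2) ∧
        (G.Adj p.1 p.2 ↔ H.Adj (xs (Fin.castLE h p.1)) (xs (Fin.castLE h p.2)))) := by
  letI := H.structure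
  unfold clause
  split_ifs with h1 h2
  · simp [h1]
  · simp [h1, h2, Term.realize]
  · simp [h1, h2, Term.realize]

theorem realize_matrixOf {V : Type} (H : SimpleGraph V) {n N : ℕ} (h : n ≤ N)
    (G : SimpleGraph (Fin n)) (v : Empty → V) (xs : Fin N → V) :
    @BoundedFormula.Realize Language.graph V H.structure Empty N (matrixOf h G) v xs ↔
      ∀ i j : Fin n, i ≠ j → xs (Fin.castLE h i) ≠ xs (Fin.castLE h j) ∧
        (G.Adj i j ↔ H.Adj (xs (Fin.castLE h i)) (xs (Fin.castLE h j))) := by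
  letI := H.structure
  unfold matrixOf
  rw [realize_iInf]
  constructor
  · intro hall i j hij
    exact (realize_clause H h G v xs (i, j)).1 (hall (i, j)) hij
  · intro hc p
    exact (realize_clause H h G v xs p).2 (fun hp => hc p.1 p.2 hp)

/-- From a realized matrix, extract a graph embedding. -/
noncomputable def embOfCond {V : Type} (H : SimpleGraph V) {n N : ℕ} (h : n ≤ N)
    (G : SimpleGraph (Fin n)) (xs : Fin N → V)
    (hc : ∀ i j : Fin n, i ≠ j → xs (Fin.castLE h i) ≠ xs (Fin.castLE h j) ∧
        (G.Adj i j ↔ H.Adj (xs (Fin.castLE h i)) (xs (Fin.castLE h j)))) :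
    G ↪g H where
  toFun := fun i => xs (Fin.castLE h i)
  inj' := by
    intro i j hij
    by_contra hne
    exact (hc i j hne).1 hij
  map_rel_iff' := by
    intro i j
    by_cases hij : i = j
    · subst hij
      exact iff_of_false (fun had => H.loopless.irrefl _ had) (fun had => G.loopless.irrefl _ had)
    · exact ((hc i j hij).2).symm

/-- Membership: a finite graph on `Fin n` that lies in `C` and satisfies `φ`. -/
def Mem (C : ∀ V : Type, SimpleGraph V → Prop) (φ : Language.graph.Sentence)
    (p : Σ n, SimpleGraph (Fin n)) : Prop :=
  C (Fin p.1) p.2 ∧ GSat p.2 φ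

/-- A model of `φ` in `C` into which no strictly smaller model of `φ` in `C` embeds. -/
def Minim (C : ∀ V : Type, SimpleGraph V → Prop) (φ : Language.graph.Sentence)
    (p : Σ n, SimpleGraph (Fin n)) : Prop :=
  Mem C φ p ∧ ∀ q, Mem C φ q → q.1 < p.1 → ¬ Nonempty (q.2 ↪g p.2)

theorem descent (C : ∀ V : Type, SimpleGraph V → Prop) (φ : Language.graph.Sentence) :
    ∀ (n : ℕ) (G : SimpleGraph (Fin n)), Mem C φ ⟨n, G⟩ →
      ∃ p, Minim C φ p ∧ Nonempty (p.2 ↪g G) := by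
  intro n
  induction n using Nat.strong_induction_on with
  | _ n ih =>
    intro G hG
    by_cases hmin : ∀ q, Mem C φ q → q.1 < n → ¬ Nonempty (q.2 ↪g G)
    · exact ⟨⟨n, G⟩, ⟨hG, hmin⟩, ⟨SimpleGraph.Embedding.refl⟩⟩
    · push_neg at hmin
      obtain ⟨q, hq, hlt, hne⟩ := hmin
      obtain ⟨f⟩ := hne
      obtain ⟨p, hp, ⟨g⟩⟩ := ih q.1 hlt q.2 hq
      exact ⟨p, hp, ⟨g.trans f⟩⟩

theorem minim_finite (C : ∀ V : Type, SimpleGraph V → Prop) (φ : Language.graph.Sentence)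
    (hwqo : ¬ ∃ Gs : ℕ → Σ V : Type, SimpleGraph V,
      (∀ i : ℕ, C (Gs i).1 (Gs i).2) ∧
      (∀ i j : ℕ, i ≠ j → IsEmpty ((Gs i).2 ↪g (Gs j).2))) :
    {p : Σ n, SimpleGraph (Fin n) | Minim C φ p}.Finite := by
  by_contra hinf
  have fib : ∀ m : ℕ, {p : Σ n, SimpleGraph (Fin n) | p.1 = m}.Finite := by
    intro m
    apply (Set.finite_range (fun G : SimpleGraph (Fin m) => (⟨m, G⟩ : Σ n, SimpleGraph (Fin n)))).subset
    rintro ⟨k, G⟩ hk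
    simp only [Set.mem_setOf_eq] at hk
    subst hk
    exact ⟨G, rfl⟩
  have hsizes : (Sigma.fst '' {p : Σ n, SimpleGraph (Fin n) | Minim C φ p}).Infinite := by
    intro hfin
    apply hinf
    apply ((hfin.biUnion (fun m _ => fib m))).subset
    intro p hp
    exact Set.mem_biUnion ⟨p, hp, rfl⟩ rfl
  have unb : ∀ b : ℕ, ∃ p, Minim C φ p ∧ b < p.1 := by
    intro b
    by_contra hb
    push_neg at hb
    apply hsizes
    apply (Set.finite_Iic b).subset
    rintro m ⟨p, hp, rfl⟩
    exact hb p hp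
  choose F hF1 hF2 using unb
  obtain ⟨g, hg0, hgs⟩ : ∃ g : ℕ → Σ n, SimpleGraph (Fin n),
      g 0 = F 0 ∧ ∀ k, g (k + 1) = F (g k).1 :=
    ⟨fun k => Nat.rec (F 0) (fun _ p => F p.1) k, rfl, fun _ => rfl⟩
  have hmem : ∀ k, Minim C φ (g k) := by
    intro k
    cases k with
    | zero => rw [hg0]; exact hF1 0
    | succ k => rw [hgs]; exact hF1 _
  have hsm : StrictMono (fun k => (g k).1) := by
    apply strictMono_nat_of_lt_succ
    intro k
    rw [hgs]
    exact hF2 (g k).1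
  apply hwqo
  refine ⟨fun k => ⟨Fin (g k).1, (g k).2⟩, fun k => (hmem k).1.1, ?_⟩
  intro i j hij
  constructor
  intro f
  rcases hij.lt_or_gt with hlt | hlt
  · exact (hmem j).2 (g i) (hmem i).1 (hsm hlt) ⟨f⟩
  · have hcard : (g i).1 ≤ (g j).1 := by
      simpa using Fintype.card_le_of_embedding f.toEmbedding
    exact absurd hcard (not_le.2 (hsm hlt))

end StmtAux

open StmtAux

/-- A hereditary, isomorphism-closed class of finite simple graphs that is well-quasi-ordered by
the induced-subgraph (embedding) relation has the extension preservation property. -/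
theorem stmt_1 (C : ∀ V : Type, SimpleGraph V → Prop)
    (hfin : ∀ (V : Type) (G : SimpleGraph V), C V G → Finite V)
    (hher : ∀ (V : Type) (G : SimpleGraph V) (S : Set V), C V G → C S (G.induce S))
    (hiso : ∀ (V W : Type) (G : SimpleGraph V) (H : SimpleGraph W),
      C V G → (G ≃g H) → C W H)
    (hwqo : ¬ ∃ Gs : ℕ → Σ V : Type, SimpleGraph V,
      (∀ i : ℕ, C (Gs i).1 (Gs i).2) ∧
      (∀ i j : ℕ, i ≠ j → IsEmpty ((Gs i).2 ↪g (Gs j).2)))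
    (φ : Language.graph.Sentence)
    (hpres : ∀ (V W : Type) (G : SimpleGraph V) (H : SimpleGraph W),
      C V G → C W H → (G ↪g H) → GSat G φ → GSat H φ) :
    ∃ ψ : Language.graph.Sentence, IsExistentialSentence ψ ∧
      ∀ (V : Type) (G : SimpleGraph V), C V G → (GSat G φ ↔ GSat G ψ) := by
  classical
  by_cases hempty : ∃ (W : Type) (H : SimpleGraph W), C W H ∧ IsEmpty W ∧ GSat H φ
  · -- φ holds everywhere on C; take ψ := ⊤.
    obtain ⟨W, H, hCW, hW, hHφ⟩ := hempty
    refine ⟨(⊤ : Language.graph.BoundedFormula Empty 0).exs, ⟨0, ⊤, BoundedFormula.IsQF.top, rfl⟩, ?_⟩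
    intro V G hC
    have hφG : GSat G φ := by
      refine hpres W V H G hCW hC ?_ hHφ
      exact ⟨⟨fun w => isEmptyElim w, fun {a} => isEmptyElim a⟩, fun {a} => isEmptyElim a⟩
    have : GSat G ((⊤ : Language.graph.BoundedFormula Empty 0).exs) := by
      letI := G.structure
      exact BoundedFormula.realize_top.2 trivial
    exact iff_of_true hφG this
  · push_neg at hempty
    set S : Set (Σ n, SimpleGraph (Fin n)) := {p | Minim C φ p} with hSdef
    have hSfin : S.Finite := minim_finite C φ hwqo
    have hpos : ∀ p ∈ S, 1 ≤ p.1 := by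
      intro p hp
      by_contra hlt
      have h0 : p.1 = 0 := by omega
      have : IsEmpty (Fin p.1) := by rw [h0]; infer_instance
      exact hempty (Fin p.1) p.2 hp.1.1 this hp.1.2
    set F : Finset (Σ n, SimpleGraph (Fin n)) := hSfin.toFinset with hFdef
    set N : ℕ := F.sup Sigma.fst with hNdef
    have hleN : ∀ p ∈ F, p.1 ≤ N := fun p hp => Finset.le_sup (f := Sigma.fst) hp
    set Θ : Language.graph.BoundedFormula Empty N :=
      BoundedFormula.iSup (fun p : F => if h : p.1.1 ≤ N then matrixOf h p.1.2 else ⊥) with hΘdef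
    refine ⟨Θ.exs, ⟨N, Θ, ?_, rfl⟩, ?_⟩
    · apply isQF_iSup
      intro p
      by_cases h : p.1.1 ≤ N
      · rw [dif_pos h]; exact matrixOf_isQF h p.1.2
      · rw [dif_neg h]; exact BoundedFormula.isQF_bot
    · intro V G hC
      letI := hfin V G hC
      letI := G.structure
      have hGψ : GSat G Θ.exs ↔ ∃ xs : Fin N → V, Θ.Realize (default : Empty → V) xs :=
        BoundedFormula.realize_exs
      constructor
      · -- φ → ψ
        intro hφG
        obtain ⟨n, G', ⟨e⟩⟩ := exists_fin_copy G
        have hC' : C (Fin n) G' := hiso V (Fin n) G G' hC e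
        have hφ' : GSat G' φ := (gsat_iso e φ).1 hφG
        obtain ⟨p, hpMin, ⟨f⟩⟩ := descent C φ n G' ⟨hC', hφ'⟩
        have hpS : p ∈ S := hpMin
        have hpF : p ∈ F := hSfin.mem_toFinset.2 hpS
        have hle : p.1 ≤ N := hleN p hpF
        have hp1 : 1 ≤ p.1 := hpos p hpS
        have h0lt : 0 < p.1 := hp1
        set emb : p.2 ↪g G := f.trans e.symm.toEmbedding with hembdef
        set xs : Fin N → V := fun k =>
          if hk : (k : ℕ) < p.1 then emb ⟨k, hk⟩ else emb ⟨0, h0lt⟩ with hxsdef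
        apply hGψ.2
        refine ⟨xs, ?_⟩
        rw [BoundedFormula.realize_iSup]
        refine ⟨⟨p, hpF⟩, ?_⟩
        dsimp only
        rw [dif_pos hle]
        rw [realize_matrixOf]
        intro i j hij
        have hxi : xs (Fin.castLE hle i) = emb i := by
          rw [hxsdef]
          simp only [Fin.coe_castLE]
          rw [dif_pos i.isLt]
        have hxj : xs (Fin.castLE hle j) = emb j := by
          rw [hxsdef]
          simp only [Fin.coe_castLE]
          rw [dif_pos j.isLt]
        rw [hxi, hxj]
        exact ⟨fun h => hij (emb.injective h), (emb.map_adj_iff).symm⟩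
      · -- ψ → φ
        intro hψG
        obtain ⟨xs, hxs⟩ := hGψ.1 hψG
        rw [BoundedFormula.realize_iSup] at hxs
        obtain ⟨⟨p, hpF⟩, hreal⟩ := hxs
        have hpS : p ∈ S := hSfin.mem_toFinset.1 hpF
        have hle : p.1 ≤ N := hleN p hpF
        dsimp only at hreal
        rw [dif_pos hle] at hreal
        rw [realize_matrixOf] at hreal
        have emb : p.2 ↪g G := embOfCond G hle p.2 xs hreal
        exact hpres (Fin p.1) V p.2 G hpS.1.1 hC emb hpS.1.2
end

section
/- For every n ≥ 7, the graph H_n has cliquewidth at most 4. -/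
open FirstOrder Language

/-- Vertex set of `H_n`: `Sum.inl (Sum.inl i)` is `v_{i+1}`, `Sum.inl (Sum.inr j)` is `u_{j+1}`,
`Sum.inr false` is `a`, and `Sum.inr true` is `b` (indices are 0-based). -/
abbrev HVert (n : ℕ) : Type := (Fin n ⊕ Fin n) ⊕ Bool

def HnRel (n : ℕ) : HVert n → HVert n → Prop
  | Sum.inl (Sum.inl i), Sum.inl (Sum.inr j) => (i : ℕ) ≤ (j : ℕ)
  | Sum.inl (Sum.inl i), Sum.inl (Sum.inl j) => (j : ℕ) = (i : ℕ) + 1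
  | Sum.inl (Sum.inr i), Sum.inl (Sum.inr j) => (i : ℕ) < (j : ℕ) ∧ (j : ℕ) ≠ (i : ℕ) + 1
  | Sum.inr false, Sum.inl (Sum.inr i) => 1 ≤ (i : ℕ)
  | Sum.inr true, Sum.inl (Sum.inr i) => n - 2 ≤ (i : ℕ)
  | Sum.inr false, Sum.inl (Sum.inl i) => (i : ℕ) = 1
  | Sum.inr true, Sum.inl (Sum.inl i) => (i : ℕ) = n - 2
  | _, _ => False

/-- The graph `H_n` from the paper: `v_i u_j` iff `i ≤ j`; `v_i v_j` (`i < j`) iff `j = i + 1`;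
`u_i u_j` (`i < j`) iff `j ≠ i + 1`; `a u_i` for `i ≥ 2`; `b u_i` for `i ≥ n - 1`;
`a v_2`; `b v_{n-1}` (stated with 1-based indices). -/
def Hgraph (n : ℕ) : SimpleGraph (HVert n) := SimpleGraph.fromRel (HnRel n)

/-- `CliqueExpr k V G c` means the `k`-colored graph `(G, c)` is constructible using the
cliquewidth operations: creating a single colored vertex, disjoint union, adding all edges
between two distinct color classes, and recoloring. -/
inductive CliqueExpr (k : ℕ) : (V : Type) → SimpleGraph V → (V → Fin k) → Prop
  | single (c : Fin k) : CliqueExpr k PUnit ⊥ (fun _ => c)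
  | union {V W : Type} {G : SimpleGraph V} {H : SimpleGraph W} {cG : V → Fin k} {cH : W → Fin k} :
      CliqueExpr k V G cG → CliqueExpr k W H cH →
      CliqueExpr k (V ⊕ W) (G ⊕g H) (Sum.elim cG cH)
  | addEdges {V : Type} {G : SimpleGraph V} {c : V → Fin k} (i j : Fin k) (hij : i ≠ j) :
      CliqueExpr k V G c →
      CliqueExpr k V (G ⊔ SimpleGraph.fromRel (fun x y => c x = i ∧ c y = j)) c
  | recolor {V : Type} {G : SimpleGraph V} {c : V → Fin k} (i j : Fin k) :
      CliqueExpr k V G c → CliqueExpr k V G (fun v => if c v = i then j else c v)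

/-- `G` has cliquewidth at most `k`: it is isomorphic to the underlying graph of a
constructible `k`-colored graph. -/
def CliquewidthLE {V : Type} (G : SimpleGraph V) (k : ℕ) : Prop :=
  ∃ (W : Type) (H : SimpleGraph W) (c : W → Fin k), CliqueExpr k W H c ∧ Nonempty (G ≃g H)

-- infrastructure to test, appended after base defs
section Infra

/-- Constructibility up to isomorphism (with colors transported). -/
def Buildable (k : ℕ) (V : Type) (G : SimpleGraph V) (c : V → Fin k) : Prop :=
  ∃ (W : Type) (H : SimpleGraph W) (d : W → Fin k) (e : G ≃g H),
    CliqueExpr k W H d ∧ ∀ v, d (e v) = c v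

lemma buildable_congr {k : ℕ} {V V' : Type} {G : SimpleGraph V} {G' : SimpleGraph V'}
    {c : V → Fin k} {c' : V' → Fin k} (h : Buildable k V G c) (e : G' ≃g G)
    (hc : ∀ v, c (e v) = c' v) : Buildable k V' G' c' := by
  obtain ⟨W, H, d, f, hf, hd⟩ := h
  exact ⟨W, H, d, e.trans f, hf, fun v => by simpa [hd] using hc v⟩

lemma buildable_single (k : ℕ) (c : Fin k) : Buildable k PUnit ⊥ (fun _ => c) :=
  ⟨PUnit, ⊥, fun _ => c, SimpleGraph.Iso.refl, CliqueExpr.single c, fun _ => rfl⟩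

lemma buildable_addVertex {k : ℕ} {V : Type} {G : SimpleGraph V} {c : V → Fin k}
    (h : Buildable k V G c) (d : Fin k) :
    Buildable k (V ⊕ PUnit) (G ⊕g (⊥ : SimpleGraph PUnit)) (Sum.elim c (fun _ => d)) := by
  obtain ⟨W, H, dH, e, he, hd⟩ := h
  refine ⟨W ⊕ PUnit, H ⊕g ⊥, Sum.elim dH (fun _ => d),
    ⟨Equiv.sumCongr e.toEquiv (Equiv.refl _), ?_⟩,
    CliqueExpr.union he (CliqueExpr.single d), ?_⟩
  · intro x y; cases x <;> cases y <;> simp [e.map_adj_iff]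
  · intro v; cases v <;> simp [hd]

lemma buildable_addEdges {k : ℕ} {V : Type} {G : SimpleGraph V} {c : V → Fin k}
    (i j : Fin k) (hij : i ≠ j) (h : Buildable k V G c) :
    Buildable k V (G ⊔ SimpleGraph.fromRel (fun x y => c x = i ∧ c y = j)) c := by
  obtain ⟨W, H, dH, e, he, hd⟩ := h
  refine ⟨W, H ⊔ SimpleGraph.fromRel (fun x y => dH x = i ∧ dH y = j), dH,
    ⟨e.toEquiv, ?_⟩, CliqueExpr.addEdges i j hij he, hd⟩
  intro x y
  have hx : dH (e.toEquiv x) = c x := hd x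
  have hy : dH (e.toEquiv y) = c y := hd y
  have hadj : H.Adj (e.toEquiv x) (e.toEquiv y) ↔ G.Adj x y := e.map_adj_iff
  simp only [SimpleGraph.sup_adj, SimpleGraph.fromRel_adj, hadj, hx, hy, ne_eq,
    Equiv.apply_eq_iff_eq]

lemma buildable_recolor {k : ℕ} {V : Type} {G : SimpleGraph V} {c : V → Fin k}
    (i j : Fin k) (h : Buildable k V G c) :
    Buildable k V G (fun v => if c v = i then j else c v) := by
  obtain ⟨W, H, dH, e, he, hd⟩ := h
  exact ⟨W, H, fun w => if dH w = i then j else dH w, e, CliqueExpr.recolor i j he,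
    fun v => by simp [hd]⟩

end Infra

section Construction

/-- Vertices present after stage `s` (0-based). -/
def memS (n s : ℕ) : HVert n → Prop
  | Sum.inl (Sum.inl j) => (j : ℕ) ≤ s
  | Sum.inl (Sum.inr j) => (j : ℕ) ≤ s
  | Sum.inr false => True
  | Sum.inr true => n - 3 ≤ s

/-- Coloring after stage `s`: `0` = old, `1` = current `v` (and companions), `2` = current `u`. -/
def colS (n s : ℕ) : HVert n → Fin 4
  | Sum.inl (Sum.inl j) => if (j : ℕ) = s then 1 else 0
  | Sum.inl (Sum.inr j) => if (j : ℕ) = s then 2 else 0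
  | Sum.inr false => if s = 0 then 1 else 0
  | Sum.inr true => if s = n - 3 then 1 else 0

lemma buildable_comap_transfer {k : ℕ} {V T : Type} {G : SimpleGraph V} {g : T → V}
    {c : T → Fin k} {col : V → Fin k} {p : V → Prop}
    (h : Buildable k T (G.comap g) c)
    (hinj : Function.Injective g) (hmem : ∀ t, p (g t))
    (hsurj : ∀ x, p x → ∃ t, g t = x) (hcol : ∀ t, c t = col (g t)) :
    Buildable k {x // p x} (G.comap Subtype.val) (fun x => col x.1) := by
  have hbij : Function.Bijective (fun t => (⟨g t, hmem t⟩ : {x // p x})) :=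
    ⟨fun a b hab => hinj (congrArg Subtype.val hab),
     fun x => by obtain ⟨t, ht⟩ := hsurj x.1 x.2; exact ⟨t, Subtype.ext ht⟩⟩
  let E := Equiv.ofBijective _ hbij
  have hg : ∀ x : {x // p x}, g (E.symm x) = x.1 := fun x =>
    congrArg Subtype.val (E.apply_symm_apply x)
  refine buildable_congr h ⟨E.symm, ?_⟩ ?_
  · intro x y
    show G.Adj (g (E.symm x)) (g (E.symm y)) ↔ G.Adj x.1 y.1
    rw [hg, hg]
  · intro v; rw [hcol]; exact congrArg col (hg v)

lemma base_case (n : ℕ) (hn : 7 ≤ n) :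
    Buildable 4 {x : HVert n // memS n 0 x}
      ((Hgraph n).comap Subtype.val) (fun x => colS n 0 x.1) := by
  have h0 : 0 < n := by omega
  set v0 : HVert n := Sum.inl (Sum.inl ⟨0, h0⟩) with hv0
  set u0 : HVert n := Sum.inl (Sum.inr ⟨0, h0⟩) with hu0
  set av : HVert n := Sum.inr false with hav
  set g : (PUnit ⊕ PUnit) ⊕ PUnit → HVert n :=
    Sum.elim (Sum.elim (fun _ => v0) (fun _ => u0)) (fun _ => av) with hgdef
  have B0 := buildable_addVertex (buildable_single 4 1) 2
  have B1 := buildable_addEdges (1 : Fin 4) 2 (by decide) B0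
  have B2 := buildable_addVertex B1 1
  have hEq : ((((⊥ : SimpleGraph PUnit) ⊕g (⊥ : SimpleGraph PUnit)) ⊔
      SimpleGraph.fromRel (fun x y => Sum.elim (fun _ => (1:Fin 4)) (fun _ => 2) x = 1 ∧
        Sum.elim (fun _ => (1:Fin 4)) (fun _ => 2) y = 2)) ⊕g (⊥ : SimpleGraph PUnit)) =
      (Hgraph n).comap g := by
    ext x y
    rcases x with (⟨⟩ | ⟨⟩) | ⟨⟩ <;> rcases y with (⟨⟩ | ⟨⟩) | ⟨⟩ <;>
      simp [Hgraph, HnRel, hgdef, hv0, hu0, hav, SimpleGraph.fromRel_adj]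
  rw [hEq] at B2
  refine buildable_comap_transfer B2 ?_ ?_ ?_ ?_
  · rintro ((⟨⟩ | ⟨⟩) | ⟨⟩) ((⟨⟩ | ⟨⟩) | ⟨⟩) h <;>
      first
        | rfl
        | (exfalso; rw [hgdef] at h; simp [hv0, hu0, hav] at h)
  · rintro ((⟨⟩ | ⟨⟩) | ⟨⟩) <;> simp [hgdef, hv0, hu0, hav, memS]
  · rintro ((j | j) | (_ | _)) hx
    · refine ⟨Sum.inl (Sum.inl PUnit.unit), ?_⟩
      have hj : (j : ℕ) = 0 := Nat.le_zero.mp hx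
      simp [hgdef, hv0, Fin.ext_iff, hj]
    · refine ⟨Sum.inl (Sum.inr PUnit.unit), ?_⟩
      have hj : (j : ℕ) = 0 := Nat.le_zero.mp hx
      simp [hgdef, hu0, Fin.ext_iff, hj]
    · exact ⟨Sum.inr PUnit.unit, rfl⟩
    · exact absurd (show n - 3 ≤ 0 from hx) (by omega)
  · rintro ((⟨⟩ | ⟨⟩) | ⟨⟩) <;> simp [hgdef, hv0, hu0, hav, colS]

end Construction

@[simp] lemma memS_vv (n s : ℕ) (j : Fin n) : memS n s (Sum.inl (Sum.inl j)) = ((j : ℕ) ≤ s) := rfl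
@[simp] lemma memS_uu (n s : ℕ) (j : Fin n) : memS n s (Sum.inl (Sum.inr j)) = ((j : ℕ) ≤ s) := rfl
@[simp] lemma memS_a (n s : ℕ) : memS n s (Sum.inr false) = True := rfl
@[simp] lemma memS_b (n s : ℕ) : memS n s (Sum.inr true) = (n - 3 ≤ s) := rfl
@[simp] lemma colS_vv (n s : ℕ) (j : Fin n) :
    colS n s (Sum.inl (Sum.inl j)) = if (j : ℕ) = s then 1 else 0 := rfl
@[simp] lemma colS_uu (n s : ℕ) (j : Fin n) :
    colS n s (Sum.inl (Sum.inr j)) = if (j : ℕ) = s then 2 else 0 := rfl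
@[simp] lemma colS_a (n s : ℕ) : colS n s (Sum.inr false) = if s = 0 then 1 else 0 := rfl
@[simp] lemma colS_b (n s : ℕ) : colS n s (Sum.inr true) = if s = n - 3 then 1 else 0 := rfl

lemma buildable_cast {k : ℕ} {V : Type} {G G' : SimpleGraph V} {c : V → Fin k}
    (h : Buildable k V G c) (hGG : G = G') : Buildable k V G' c := hGG ▸ h

set_option maxHeartbeats 4000000 in
set_option maxRecDepth 100000 in
lemma step_case_nb (n s : ℕ) (hn : 7 ≤ n) (hs : s + 1 < n) (hb : s + 1 ≠ n - 3)
    (IH : Buildable 4 {x : HVert n // memS n s x}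
      ((Hgraph n).comap Subtype.val) (fun x => colS n s x.1)) :
    Buildable 4 {x : HVert n // memS n (s+1) x}
      ((Hgraph n).comap Subtype.val) (fun x => colS n (s+1) x.1) := by
  have B1 := buildable_addVertex IH 3
  have B2 := buildable_addEdges (3 : Fin 4) 0 (by decide) B1
  have B3 := buildable_addEdges (3 : Fin 4) 1 (by decide) B2
  have B4 := buildable_recolor (2 : Fin 4) 0 B3
  have B5 := buildable_addVertex B4 2
  have B6 := buildable_addEdges (2 : Fin 4) 1 (by decide) B5
  have B7 := buildable_addEdges (2 : Fin 4) 3 (by decide) B6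
  have B9 := buildable_recolor (1 : Fin 4) 0 B7
  have B10 := buildable_recolor (2 : Fin 4) 1 B9
  have B11 := buildable_recolor (3 : Fin 4) 2 B10
  refine buildable_comap_transfer
    (g := Sum.elim (Sum.elim Subtype.val (fun _ => Sum.inl (Sum.inr ⟨s+1, hs⟩)))
      (fun _ => Sum.inl (Sum.inl ⟨s+1, hs⟩)))
    (p := memS n (s+1)) (col := colS n (s+1))
    (buildable_cast B11 ?_) ?_ ?_ ?_ ?_ <;>
    clear B1 B2 B3 B4 B5 B6 B7 B9 B10 B11 IH
  · ext x y
    rcases x with (⟨(i | i) | (_ | _), hx⟩ | ⟨⟩) | ⟨⟩ <;>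
      rcases y with (⟨(j | j) | (_ | _), hy⟩ | ⟨⟩) | ⟨⟩ <;>
      (try simp [Hgraph, HnRel, SimpleGraph.fromRel_adj, Fin.ext_iff, -Fin.val_eq_zero_iff]) <;>
      (try split_ifs) <;> (try simp_all) <;> (try simp_all) <;> (try omega)
  · rintro ((⟨(i | i) | (_ | _), hx⟩ | ⟨⟩) | ⟨⟩)
      ((⟨(j | j) | (_ | _), hy⟩ | ⟨⟩) | ⟨⟩) h <;>
      (try simp_all [Fin.ext_iff]) <;> (try simp_all [Fin.ext_iff]) <;> (try omega)
  · rintro ((⟨(i | i) | (_ | _), hx⟩ | ⟨⟩) | ⟨⟩) <;>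
      (try simp_all) <;> (try simp_all) <;> (try omega)
  · rintro ((j | j) | (_ | _)) hx
    · by_cases hj : (j : ℕ) = s + 1
      · exact ⟨Sum.inr PUnit.unit, by simp [Fin.ext_iff, hj]⟩
      · have hj' : (j : ℕ) ≤ s := by have : (j : ℕ) ≤ s + 1 := hx; omega
        exact ⟨Sum.inl (Sum.inl ⟨Sum.inl (Sum.inl j), hj'⟩), rfl⟩
    · by_cases hj : (j : ℕ) = s + 1
      · exact ⟨Sum.inl (Sum.inr PUnit.unit), by simp [Fin.ext_iff, hj]⟩
      · have hj' : (j : ℕ) ≤ s := by have : (j : ℕ) ≤ s + 1 := hx; omega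
        exact ⟨Sum.inl (Sum.inl ⟨Sum.inl (Sum.inr j), hj'⟩), rfl⟩
    · exact ⟨Sum.inl (Sum.inl ⟨Sum.inr false, trivial⟩), rfl⟩
    · have hb' : n - 3 ≤ s := by have : n - 3 ≤ s + 1 := hx; omega
      exact ⟨Sum.inl (Sum.inl ⟨Sum.inr true, hb'⟩), rfl⟩
  · rintro ((⟨(i | i) | (_ | _), hx⟩ | ⟨⟩) | ⟨⟩) <;>
      (try simp) <;> (try split_ifs) <;> (try simp_all) <;> (try simp_all) <;> (try omega)

set_option maxHeartbeats 4000000 in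
set_option maxRecDepth 100000 in
lemma step_case_b (n s : ℕ) (hn : 7 ≤ n) (hs : s + 1 < n) (hb : s + 1 = n - 3)
    (IH : Buildable 4 {x : HVert n // memS n s x}
      ((Hgraph n).comap Subtype.val) (fun x => colS n s x.1)) :
    Buildable 4 {x : HVert n // memS n (s+1) x}
      ((Hgraph n).comap Subtype.val) (fun x => colS n (s+1) x.1) := by
  have B1 := buildable_addVertex IH 3
  have B2 := buildable_addEdges (3 : Fin 4) 0 (by decide) B1
  have B3 := buildable_addEdges (3 : Fin 4) 1 (by decide) B2
  have B4 := buildable_recolor (2 : Fin 4) 0 B3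
  have B5 := buildable_addVertex B4 2
  have B6 := buildable_addEdges (2 : Fin 4) 1 (by decide) B5
  have B7 := buildable_addEdges (2 : Fin 4) 3 (by decide) B6
  have B8 := buildable_addVertex B7 2
  have B9 := buildable_recolor (1 : Fin 4) 0 B8
  have B10 := buildable_recolor (2 : Fin 4) 1 B9
  have B11 := buildable_recolor (3 : Fin 4) 2 B10
  refine buildable_comap_transfer
    (g := Sum.elim (Sum.elim (Sum.elim Subtype.val (fun _ => Sum.inl (Sum.inr ⟨s+1, hs⟩)))
      (fun _ => Sum.inl (Sum.inl ⟨s+1, hs⟩))) (fun _ => Sum.inr true))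
    (p := memS n (s+1)) (col := colS n (s+1))
    (buildable_cast B11 ?_) ?_ ?_ ?_ ?_ <;>
    clear B1 B2 B3 B4 B5 B6 B7 B8 B9 B10 B11 IH
  · ext x y
    rcases x with ((⟨(i | i) | (_ | _), hx⟩ | ⟨⟩) | ⟨⟩) | ⟨⟩ <;>
      rcases y with ((⟨(j | j) | (_ | _), hy⟩ | ⟨⟩) | ⟨⟩) | ⟨⟩ <;>
      (try simp [Hgraph, HnRel, SimpleGraph.fromRel_adj, Fin.ext_iff, -Fin.val_eq_zero_iff]) <;>
      (try split_ifs) <;> (try simp_all) <;> (try simp_all) <;> (try omega)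
  · rintro (((⟨(i | i) | (_ | _), hx⟩ | ⟨⟩) | ⟨⟩) | ⟨⟩)
      (((⟨(j | j) | (_ | _), hy⟩ | ⟨⟩) | ⟨⟩) | ⟨⟩) h <;>
      (try simp_all [Fin.ext_iff]) <;> (try simp_all [Fin.ext_iff]) <;> (try omega)
  · rintro (((⟨(i | i) | (_ | _), hx⟩ | ⟨⟩) | ⟨⟩) | ⟨⟩) <;>
      (try simp_all) <;> (try simp_all) <;> (try omega)
  · rintro ((j | j) | (_ | _)) hx
    · by_cases hj : (j : ℕ) = s + 1
      · exact ⟨Sum.inl (Sum.inr PUnit.unit), by simp [Fin.ext_iff, hj]⟩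
      · have hj' : (j : ℕ) ≤ s := by have : (j : ℕ) ≤ s + 1 := hx; omega
        exact ⟨Sum.inl (Sum.inl (Sum.inl ⟨Sum.inl (Sum.inl j), hj'⟩)), rfl⟩
    · by_cases hj : (j : ℕ) = s + 1
      · exact ⟨Sum.inl (Sum.inl (Sum.inr PUnit.unit)), by simp [Fin.ext_iff, hj]⟩
      · have hj' : (j : ℕ) ≤ s := by have : (j : ℕ) ≤ s + 1 := hx; omega
        exact ⟨Sum.inl (Sum.inl (Sum.inl ⟨Sum.inl (Sum.inr j), hj'⟩)), rfl⟩
    · exact ⟨Sum.inl (Sum.inl (Sum.inl ⟨Sum.inr false, trivial⟩)), rfl⟩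
    · exact ⟨Sum.inr PUnit.unit, rfl⟩
  · rintro (((⟨(i | i) | (_ | _), hx⟩ | ⟨⟩) | ⟨⟩) | ⟨⟩) <;>
      (try simp) <;> (try split_ifs) <;> (try simp_all) <;> (try simp_all) <;> (try omega)

lemma key_invariant (n : ℕ) (hn : 7 ≤ n) : ∀ s, s < n → Buildable 4 {x : HVert n // memS n s x}
    ((Hgraph n).comap Subtype.val) (fun x => colS n s x.1) := by
  intro s
  induction s with
  | zero => intro _; exact base_case n hn
  | succ s ih =>
      intro hs
      by_cases hb : s + 1 = n - 3
      · exact step_case_b n s hn hs hb (ih (by omega))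
      · exact step_case_nb n s hn hs hb (ih (by omega))

theorem stmt_6' (n : ℕ) (hn : 7 ≤ n) : CliquewidthLE (Hgraph n) 4 := by
  obtain ⟨W, H, d, e, he, -⟩ := key_invariant n hn (n - 1) (by omega)
  have hall : ∀ x : HVert n, memS n (n - 1) x := by
    rintro ((j | j) | (_ | _)) <;> simp <;> omega
  have iso : Hgraph n ≃g (Hgraph n).comap
      (Subtype.val : {x : HVert n // memS n (n - 1) x} → HVert n) :=
    ⟨(Equiv.subtypeUnivEquiv hall).symm, Iff.rfl⟩
  exact ⟨W, H, d, he, ⟨iso.trans e⟩⟩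

/-- For every `n ≥ 7`, the graph `H_n` has cliquewidth at most `4`. -/
theorem stmt_6 (n : ℕ) (hn : 7 ≤ n) : CliquewidthLE (Hgraph n) 4 :=
  stmt_6' n hn
end

section
/- Let G be a finite simple graph, let p, d, n ∈ ℕ, and let t : V(G) → {1,…,p} be any coloring of the vertices. Then there exist a radius e ≤ 2dp and a set D ⊆ V(G) with |D| ≤ (n−1)p such that for every color i ∈ {1,…,p}, either (a) every vertex v with t(v) = i satisfies N_d(v) ⊆ N_e(D) (the color i is covered by N_e(D)), or (b) there exists a set S of n vertices of color i, pairwise at distance greater than 2d in G, such that N_d(v) ∩ N_e(D) = ∅ for every v ∈ S (the color i is n-free over N_e(D)). -/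
open FirstOrder Language

/-- The ball `N_r(v)`: vertices reachable from `v` by a walk of length at most `r`. -/
def gball {V : Type} (G : SimpleGraph V) (r : ℕ) (v : V) : Set V :=
  {u | ∃ w : G.Walk v u, w.length ≤ r}

/-- `N_r(D)` for a finite set `D` of vertices. -/
def gballSet {V : Type} (G : SimpleGraph V) (r : ℕ) (D : Finset V) : Set V :=
  ⋃ v ∈ D, gball G r v

namespace Stmt12Aux

variable {V : Type} (G : SimpleGraph V)

/-- There is a walk of length at most `r` from `u` to `v`. -/
def Reach (r : ℕ) (u v : V) : Prop := ∃ w : G.Walk u v, w.length ≤ r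

lemma reach_refl (r : ℕ) (u : V) : Reach G r u u :=
  ⟨SimpleGraph.Walk.nil, by simp⟩

lemma reach_symm {r : ℕ} {u v : V} (h : Reach G r u v) : Reach G r v u := by
  obtain ⟨w, hw⟩ := h
  exact ⟨w.reverse, by simpa using hw⟩

lemma reach_trans {a b : ℕ} {u v x : V} (h1 : Reach G a u v) (h2 : Reach G b v x) :
    Reach G (a + b) u x := by
  obtain ⟨w1, hw1⟩ := h1
  obtain ⟨w2, hw2⟩ := h2
  refine ⟨w1.append w2, ?_⟩
  rw [SimpleGraph.Walk.length_append]
  omega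

lemma reach_mono {r r' : ℕ} {u v : V} (h : r ≤ r') (hr : Reach G r u v) : Reach G r' u v := by
  obtain ⟨w, hw⟩ := hr
  exact ⟨w, le_trans hw h⟩

lemma mem_gball {d : ℕ} {v x : V} : x ∈ gball G d v ↔ Reach G d v x := Iff.rfl

lemma mem_gballSet {e : ℕ} {D : Finset V} {x : V} :
    x ∈ gballSet G e D ↔ ∃ u ∈ D, Reach G e u x := by
  simp [gballSet, gball, Reach, Set.mem_iUnion]

/-- disjointness of a ball from `N_e(D)` follows if the center is far from `D`. -/
lemma ball_disjoint {e d : ℕ} {D : Finset V} {v : V}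
    (h : ¬ ∃ u ∈ D, Reach G (e + d) u v) :
    gball G d v ∩ gballSet G e D = ∅ := by
  ext x
  simp only [Set.mem_inter_iff, Set.mem_empty_iff_false, iff_false, not_and]
  intro hx1 hx2
  rw [mem_gball] at hx1
  rw [mem_gballSet] at hx2
  obtain ⟨u, hu, hux⟩ := hx2
  exact h ⟨u, hu, reach_trans G hux (reach_symm G hx1)⟩

/-- Greedy construction of a maximal `>2d`-scattered subset of a finite set,
which then dominates the set within distance `2d`. -/
lemma exists_scattered (d : ℕ) :
    ∀ (m : ℕ) (X : Finset V), X.card ≤ m →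
      ∃ S : Finset V, S ⊆ X ∧
        (∀ a ∈ S, ∀ b ∈ S, a ≠ b → ¬ Reach G (2 * d) a b) ∧
        (∀ x ∈ X, ∃ s ∈ S, Reach G (2 * d) s x) := by
  intro m
  induction m with
  | zero =>
    intro X hX
    have : X = ∅ := Finset.card_eq_zero.mp (Nat.le_zero.mp hX)
    subst this
    exact ⟨∅, by simp, by simp, by simp⟩
  | succ m ih =>
    intro X hX
    classical
    rcases X.eq_empty_or_nonempty with h | ⟨x₀, hx₀⟩
    · subst h
      exact ⟨∅, by simp, by simp, by simp⟩
    · set X' := X.filter (fun x => ¬ Reach G (2 * d) x₀ x) with hX'def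
      have hx₀notin : x₀ ∉ X' := by
        simp [hX'def, Finset.mem_filter]
        intro _
        exact reach_refl G _ _
      have hX'card : X'.card ≤ m := by
        have h1 : X'.card < X.card := by
          apply Finset.card_lt_card
          constructor
          · exact Finset.filter_subset _ _
          · intro hsub
            exact hx₀notin (hsub hx₀)
        omega
      obtain ⟨S', hS'sub, hS'scat, hS'dom⟩ := ih X' hX'card
      refine ⟨insert x₀ S', ?_, ?_, ?_⟩
      · intro a ha
        rcases Finset.mem_insert.mp ha with rfl | ha
        · exact hx₀
        · exact (Finset.filter_subset _ _) (hS'sub ha)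
      · intro a ha b hb hab
        rcases Finset.mem_insert.mp ha with ha0 | haS
        · rcases Finset.mem_insert.mp hb with hb0 | hbS
          · exact absurd (ha0.trans hb0.symm) hab
          · have hmem := hS'sub hbS
            rw [hX'def, Finset.mem_filter] at hmem
            rw [ha0]
            exact hmem.2
        · rcases Finset.mem_insert.mp hb with hb0 | hbS
          · have hmem := hS'sub haS
            rw [hX'def, Finset.mem_filter] at hmem
            intro hr
            rw [hb0] at hr
            exact hmem.2 (reach_symm G hr)
          · exact hS'scat a haS b hbS hab
      · intro x hx
        by_cases hr : Reach G (2 * d) x₀ x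
        · exact ⟨x₀, Finset.mem_insert_self _ _, hr⟩
        · have hx' : x ∈ X' := by
            rw [hX'def, Finset.mem_filter]
            exact ⟨hx, hr⟩
          obtain ⟨s, hs, hsx⟩ := hS'dom x hx'
          exact ⟨s, Finset.mem_insert_of_mem hs, hsx⟩

variable {p : ℕ} (t : V → Fin p) (d n : ℕ)

/-- The conclusion of the lemma for a given radius and set. -/
def Goal (e : ℕ) (D : Finset V) : Prop :=
  ∀ i : Fin p,
    (∀ v : V, t v = i → gball G d v ⊆ gballSet G e D) ∨
    (∃ S : Finset V, S.card = n ∧ (∀ v ∈ S, t v = i) ∧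
      (∀ a ∈ S, ∀ b ∈ S, a ≠ b → ∀ w : G.Walk a b, 2 * d < w.length) ∧
      (∀ v ∈ S, gball G d v ∩ gballSet G e D = ∅))

/-- The main recursion. -/
lemma lambda_rec [Fintype V] :
    ∀ (q : ℕ) (U : Finset (Fin p)) (D₀ : Finset V) (r : ℕ),
      U.card ≤ q → 3 * d ≤ r →
      (∀ i : Fin p, i ∉ U → ∀ y : V, t y = i → ∃ u ∈ D₀, Reach G (r - d) u y) →
      ∃ (e : ℕ) (D : Finset V), D₀ ⊆ D ∧ D.card ≤ D₀.card + (n - 1) * q ∧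
        (e = r ∨ e + d ≤ r + 2 * d * q) ∧ Goal G t d n e D := by
  intro q
  induction q with
  | zero =>
    intro U D₀ r hU hr h3
    have hUe : U = ∅ := Finset.card_eq_zero.mp (Nat.le_zero.mp hU)
    refine ⟨r, D₀, subset_rfl, by simp, Or.inl rfl, ?_⟩
    intro i
    left
    intro v hv x hx
    obtain ⟨u, hu, huv⟩ := h3 i (by simp [hUe]) v hv
    rw [mem_gball] at hx
    rw [mem_gballSet]
    refine ⟨u, hu, ?_⟩
    have := reach_trans G huv hx
    have heq : r - d + d = r := by omega
    rwa [heq] at this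
  | succ q ih =>
    intro U D₀ r hU hr h3
    classical
    -- the far sets and their maximal scattered subsets
    set X : Fin p → Finset V :=
      fun i => Finset.univ.filter
        (fun v => t v = i ∧ ¬ ∃ u ∈ D₀, Reach G (r + d) u v) with hXdef
    have hex : ∀ i : Fin p, ∃ S : Finset V, S ⊆ X i ∧
        (∀ a ∈ S, ∀ b ∈ S, a ≠ b → ¬ Reach G (2 * d) a b) ∧
        (∀ x ∈ X i, ∃ s ∈ S, Reach G (2 * d) s x) :=
      fun i => exists_scattered G d (X i).card (X i) le_rfl
    choose S hSsub hSscat hSdom using hex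
    by_cases hall : ∀ u ∈ U, n ≤ (S u).card
    · -- all remaining types are rich: all free at radius r
      refine ⟨r, D₀, subset_rfl, by simp, Or.inl rfl, ?_⟩
      intro i
      by_cases hiU : i ∈ U
      · right
        obtain ⟨W, hWsub, hWcard⟩ := Finset.exists_subset_card_eq (hall i hiU)
        refine ⟨W, hWcard, ?_, ?_, ?_⟩
        · intro v hv
          have := hSsub i (hWsub hv)
          rw [hXdef, Finset.mem_filter] at this
          exact this.2.1
        · intro a ha b hb hab w
          have := hSscat i a (hWsub ha) b (hWsub hb) hab
          by_contra hlen
          exact this ⟨w, by omega⟩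
        · intro v hv
          apply ball_disjoint
          have := hSsub i (hWsub hv)
          rw [hXdef, Finset.mem_filter] at this
          exact this.2.2
      · left
        intro v hv x hx
        obtain ⟨u, hu, huv⟩ := h3 i hiU v hv
        rw [mem_gball] at hx
        rw [mem_gballSet]
        refine ⟨u, hu, ?_⟩
        have := reach_trans G huv hx
        have heq : r - d + d = r := by omega
        rwa [heq] at this
    · -- some remaining type is tight
      push_neg at hall
      obtain ⟨u, huU, hucard⟩ := hall
      have hucard' : (S u).card ≤ n - 1 := by omega
      by_cases hsing : U.erase u = ∅
      · -- terminal step: cover everything at radius r + d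
        refine ⟨r + d, D₀ ∪ S u, Finset.subset_union_left, ?_, ?_, ?_⟩
        · calc (D₀ ∪ S u).card ≤ D₀.card + (S u).card := Finset.card_union_le _ _
            _ ≤ D₀.card + (n - 1) * (q + 1) := by
                have h1 : (n - 1) * 1 ≤ (n - 1) * (q + 1) :=
                  Nat.mul_le_mul_left _ (by omega)
                omega
        · right
          have h1 : 2 * d * 1 ≤ 2 * d * (q + 1) := Nat.mul_le_mul_left _ (by omega)
          omega
        · -- every vertex of the graph is within r + d of D₀ ∪ S u
          have key : ∀ x : V, ∃ w ∈ D₀ ∪ S u, Reach G (r + d) w x := by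
            intro x
            by_cases hx : ∃ w ∈ D₀, Reach G (r + d) w x
            · obtain ⟨w, hw, hwx⟩ := hx
              exact ⟨w, Finset.mem_union_left _ hw, hwx⟩
            · by_cases hj : t x ∈ U
              · have hjx : t x = u := by
                  by_contra hne
                  have : t x ∈ U.erase u := Finset.mem_erase.mpr ⟨hne, hj⟩
                  rw [hsing] at this
                  exact absurd this (Finset.notMem_empty _)
                have hxX : x ∈ X u := by
                  rw [hXdef, Finset.mem_filter]
                  exact ⟨Finset.mem_univ _, hjx, hx⟩
                obtain ⟨s, hs, hsx⟩ := hSdom u x hxX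
                exact ⟨s, Finset.mem_union_right _ hs,
                  reach_mono G (by omega) hsx⟩
              · obtain ⟨w, hw, hwx⟩ := h3 (t x) hj x rfl
                exact ⟨w, Finset.mem_union_left _ hw,
                  reach_mono G (by omega) hwx⟩
          intro i
          left
          intro v _ x _
          obtain ⟨w, hw, hwx⟩ := key x
          rw [mem_gballSet]
          exact ⟨w, hw, hwx⟩
      · -- recursive step
        have hUne : (U.erase u).Nonempty := Finset.nonempty_iff_ne_empty.mpr hsing
        have hU2 : 2 ≤ U.card := by
          obtain ⟨v, hv⟩ := hUne
          have hvu : v ≠ u := (Finset.mem_erase.mp hv).1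
          have hvU : v ∈ U := (Finset.mem_erase.mp hv).2
          exact Finset.one_lt_card.mpr ⟨v, hvU, u, huU, hvu⟩
        have hUcard' : (U.erase u).card ≤ q := by
          rw [Finset.card_erase_of_mem huU]
          omega
        have h3' : ∀ i : Fin p, i ∉ U.erase u → ∀ y : V, t y = i →
            ∃ w ∈ D₀ ∪ S u, Reach G ((r + 2 * d) - d) w y := by
          intro i hi y hy
          have heq : (r + 2 * d) - d = r + d := by omega
          rw [heq]
          by_cases hiU : i ∈ U
          · have hieq : i = u := by
              by_contra hne
              exact hi (Finset.mem_erase.mpr ⟨hne, hiU⟩)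
            subst hieq
            by_cases hyD : ∃ w ∈ D₀, Reach G (r + d) w y
            · obtain ⟨w, hw, hwy⟩ := hyD
              exact ⟨w, Finset.mem_union_left _ hw, hwy⟩
            · have hyX : y ∈ X i := by
                rw [hXdef, Finset.mem_filter]
                exact ⟨Finset.mem_univ _, hy, hyD⟩
              obtain ⟨s, hs, hsy⟩ := hSdom i y hyX
              exact ⟨s, Finset.mem_union_right _ hs,
                reach_mono G (by omega) hsy⟩
          · obtain ⟨w, hw, hwy⟩ := h3 i hiU y hy
            exact ⟨w, Finset.mem_union_left _ hw, reach_mono G (by omega) hwy⟩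
        obtain ⟨e, D, hDsub, hDcard, hebound, hGoal⟩ :=
          ih (U.erase u) (D₀ ∪ S u) (r + 2 * d) hUcard' (by omega) h3'
        refine ⟨e, D, le_trans Finset.subset_union_left hDsub, ?_, ?_, hGoal⟩
        · have h1 : (D₀ ∪ S u).card ≤ D₀.card + (n - 1) := by
            have := Finset.card_union_le D₀ (S u)
            omega
          have h2 : (n - 1) * (q + 1) = (n - 1) * q + (n - 1) := by ring
          omega
        · right
          have hq1 : 1 ≤ q := by omega
          have hexp : 2 * d * (q + 1) = 2 * d * q + 2 * d := by ring
          rcases hebound with he | he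
          · -- e = r + 2d; need e + d ≤ r + 2d(q+1), i.e. 3d ≤ 2d(q+1)
            have h1 : 2 * d * 1 ≤ 2 * d * q := Nat.mul_le_mul_left _ hq1
            omega
          · omega

end Stmt12Aux

open Stmt12Aux

/-- For any coloring of the vertices of a finite graph with `p` colors, there are a radius
`e ≤ 2dp` and a set `D` of at most `(n-1)p` vertices such that every color is either covered
by `N_e(D)` or `n`-free over `N_e(D)`. -/
theorem stmt_12 (V : Type) [Fintype V] (G : SimpleGraph V) (p d n : ℕ) (t : V → Fin p) :
    ∃ (e : ℕ) (D : Finset V), e ≤ 2 * d * p ∧ D.card ≤ (n - 1) * p ∧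
      ∀ i : Fin p,
        (∀ v : V, t v = i → gball G d v ⊆ gballSet G e D) ∨
        (∃ S : Finset V, S.card = n ∧ (∀ v ∈ S, t v = i) ∧
          (∀ a ∈ S, ∀ b ∈ S, a ≠ b → ∀ w : G.Walk a b, 2 * d < w.length) ∧
          (∀ v ∈ S, gball G d v ∩ gballSet G e D = ∅)) := by
  classical
  set T : Fin p → Finset V := fun i => Finset.univ.filter (fun v => t v = i) with hTdef
  have hex : ∀ i : Fin p, ∃ S : Finset V, S ⊆ T i ∧
      (∀ a ∈ S, ∀ b ∈ S, a ≠ b → ¬ Reach G (2 * d) a b) ∧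
      (∀ x ∈ T i, ∃ s ∈ S, Reach G (2 * d) s x) :=
    fun i => exists_scattered G d (T i).card (T i) le_rfl
  choose S0 hsub hscat hdom using hex
  by_cases hA : ∀ i : Fin p, n ≤ (S0 i).card
  · -- every color class has an n-scattered subset: all free with e = 0, D = ∅
    refine ⟨0, ∅, by omega, by simp, ?_⟩
    intro i
    right
    obtain ⟨W, hWsub, hWcard⟩ := Finset.exists_subset_card_eq (hA i)
    refine ⟨W, hWcard, ?_, ?_, ?_⟩
    · intro v hv
      have := hsub i (hWsub hv)
      rw [hTdef, Finset.mem_filter] at this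
      exact this.2
    · intro a ha b hb hab w
      have := hscat i a (hWsub ha) b (hWsub hb) hab
      by_contra hlen
      exact this ⟨w, by omega⟩
    · intro v _
      ext x
      simp [gballSet]
  · push_neg at hA
    obtain ⟨i₀, hi₀⟩ := hA
    have hp0 : 0 < p := i₀.pos
    by_cases hp1 : p = 1
    · -- single color: maximal scattered set covers everything at radius 2d
      refine ⟨2 * d, S0 i₀, by rw [hp1]; omega, ?_, ?_⟩
      · have : (S0 i₀).card ≤ n - 1 := by omega
        calc (S0 i₀).card ≤ n - 1 := this
          _ ≤ (n - 1) * p := by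
              have := Nat.mul_le_mul_left (n - 1) hp0
              omega
      · intro i
        left
        intro v _ x _
        have hx : t x = i₀ := by
          have h1 := (t x).isLt
          have h2 := i₀.isLt
          apply Fin.ext
          omega
        have hxT : x ∈ T i₀ := by
          rw [hTdef, Finset.mem_filter]
          exact ⟨Finset.mem_univ _, hx⟩
        obtain ⟨s, hs, hsx⟩ := hdom i₀ x hxT
        rw [mem_gballSet]
        exact ⟨s, hs, hsx⟩
    · have hp2 : 2 ≤ p := by omega
      set U : Finset (Fin p) := Finset.univ.filter (fun i => n ≤ (S0 i).card) with hUdef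
      set Cs : Finset (Fin p) := Finset.univ.filter (fun i => ¬ n ≤ (S0 i).card) with hCdef
      set DC : Finset V := Cs.biUnion S0 with hDCdef
      have h3 : ∀ i : Fin p, i ∉ U → ∀ y : V, t y = i →
          ∃ u ∈ DC, Reach G (3 * d - d) u y := by
        intro i hi y hy
        have hiC : i ∈ Cs := by
          rw [hCdef, Finset.mem_filter]
          refine ⟨Finset.mem_univ _, ?_⟩
          intro hc
          exact hi (by rw [hUdef, Finset.mem_filter]; exact ⟨Finset.mem_univ _, hc⟩)
        have hyT : y ∈ T i := by
          rw [hTdef, Finset.mem_filter]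
          exact ⟨Finset.mem_univ _, hy⟩
        obtain ⟨s, hs, hsy⟩ := hdom i y hyT
        refine ⟨s, ?_, ?_⟩
        · rw [hDCdef]
          exact Finset.mem_biUnion.mpr ⟨i, hiC, hs⟩
        · have heq : 3 * d - d = 2 * d := by omega
          rw [heq]
          exact hsy
      obtain ⟨e, D, hDsub, hDcard, heb, hGoal⟩ :=
        lambda_rec G t d n U.card U DC (3 * d) le_rfl (by omega) h3
      have hUlt : U.card < p := by
        have hi₀U : i₀ ∉ U := by
          rw [hUdef, Finset.mem_filter]
          push_neg
          intro _
          omega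
        have hss : U ⊂ Finset.univ := by
          constructor
          · exact Finset.subset_univ _
          · intro hsub'
            exact hi₀U (hsub' (Finset.mem_univ i₀))
        have := Finset.card_lt_card hss
        simpa using this
      refine ⟨e, D, ?_, ?_, hGoal⟩
      · rcases heb with he | he
        · have h4 : 2 * d * 2 ≤ 2 * d * p := Nat.mul_le_mul_left _ hp2
          omega
        · have h1 : 2 * d * U.card ≤ 2 * d * (p - 1) :=
            Nat.mul_le_mul_left _ (by omega)
          have h2 : 2 * d * (p - 1) + 2 * d = 2 * d * p := by
            have h3' : p - 1 + 1 = p := by omega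
            calc 2 * d * (p - 1) + 2 * d = 2 * d * (p - 1 + 1) := by ring
              _ = 2 * d * p := by rw [h3']
          omega
      · have hCcard : DC.card ≤ (n - 1) * Cs.card := by
          calc DC.card ≤ ∑ i ∈ Cs, (S0 i).card := Finset.card_biUnion_le
            _ ≤ ∑ _i ∈ Cs, (n - 1) := by
                apply Finset.sum_le_sum
                intro i hi
                rw [hCdef, Finset.mem_filter] at hi
                omega
            _ = Cs.card * (n - 1) := by rw [Finset.sum_const, smul_eq_mul]
            _ = (n - 1) * Cs.card := by ring
        have hsum : U.card + Cs.card = p := by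
          have := Finset.card_filter_add_card_filter_not
            (s := (Finset.univ : Finset (Fin p))) (p := fun i => n ≤ (S0 i).card)
          simpa [hUdef, hCdef] using this
        have hmul : (n - 1) * Cs.card + (n - 1) * U.card = (n - 1) * p := by
          calc (n - 1) * Cs.card + (n - 1) * U.card = (n - 1) * (U.card + Cs.card) := by ring
            _ = (n - 1) * p := by rw [hsum]
        omega
end

section
/- For every k ∈ ℕ, extension preservation holds over the class SC(k): every first-order sentence in the language of graphs that is preserved by embeddings over SC(k) is equivalent over SC(k) to an existential sentence. -/
open FirstOrder Language

/-- Closure of a class of graphs under (iterated, hence `n`-ary) disjoint unions. -/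
inductive DSum (Q : ∀ V : Type, SimpleGraph V → Prop) : ∀ V : Type, SimpleGraph V → Prop
  | of {V : Type} {G : SimpleGraph V} : Q V G → DSum Q V G
  | union {V W : Type} {G : SimpleGraph V} {H : SimpleGraph W} :
      DSum Q V G → DSum Q W H → DSum Q (V ⊕ W) (G ⊕g H)

/-- The graph obtained from `H` by complementing the edges inside `X` (distinct `u, v ∈ X`
become adjacent iff they were not adjacent), leaving all other pairs unchanged. -/
def flipWithin {V : Type} (H : SimpleGraph V) (X : Set V) : SimpleGraph V where
  Adj x y := x ≠ y ∧ ¬(H.Adj x y ↔ (x ∈ X ∧ y ∈ X))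
  symm := by
    constructor
    intro x y ⟨hne, h⟩
    refine ⟨hne.symm, fun h' => h ?_⟩
    rw [SimpleGraph.adj_comm, and_comm]
    exact h'
  loopless := ⟨fun x h => h.1 rfl⟩

/-- The classes `SC(k)`, up to isomorphism: `SC(0) = {K₁}`, and `SC(k+1)` consists of the
graphs obtained from a disjoint union of members of `SC(k)` by complementing the edges inside
some set `X` of vertices. -/
def SCk : ℕ → ∀ V : Type, SimpleGraph V → Prop
  | 0 => fun _ G => Nonempty (G ≃g (⊥ : SimpleGraph Unit))
  | k + 1 => fun _ G => ∃ (W : Type) (H : SimpleGraph W) (X : Set W),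
      DSum (SCk k) W H ∧ Nonempty (G ≃g flipWithin H X)


namespace SCAux

abbrev PV : Type := List (ℕ × Bool) × List Bool

/-- adjacency function on index/bool paths -/
def adjB : List (ℕ × Bool) → List (ℕ × Bool) → Bool
  | (i,a)::p, (j,b)::q => if i = j then xor (adjB p q) (a && b) else a && b
  | _, _ => false

lemma adjB_symm : ∀ p q, adjB p q = adjB q p
  | (i,a)::p, (j,b)::q => by
    simp only [adjB, adjB_symm p q, Bool.and_comm a b, eq_comm (a := i) (b := j)]
  | [], [] => rfl
  | [], _::_ => rfl
  | _::_, [] => rfl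

/-- validity of a canonical vertex set at level `k` with `m` labels -/
structure Valid (k m : ℕ) (S : Finset PV) : Prop where
  nonempty : S.Nonempty
  lenp : ∀ v ∈ S, v.1.length = k
  lenl : ∀ v ∈ S, v.2.length = m
  sep : ∀ u ∈ S, ∀ v ∈ S, u.1.map Prod.fst = v.1.map Prod.fst → u = v

/-- the canonical graph on a vertex set -/
def CG (S : Finset PV) : SimpleGraph {v : PV // v ∈ S} where
  Adj u v := u ≠ v ∧ adjB u.1.1 v.1.1 = true
  symm := by
    constructor
    rintro u v ⟨h1, h2⟩
    exact ⟨h1.symm, (adjB_symm v.1.1 u.1.1).trans h2⟩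
  loopless := ⟨fun u h => h.1 rfl⟩

/-- structured embeddings between canonical vertex sets -/
structure SEmb (S T : Finset PV) (f : PV → PV) : Prop where
  mem : ∀ v ∈ S, f v ∈ T
  inj : ∀ u ∈ S, ∀ v ∈ S, f u = f v → u = v
  lab : ∀ v ∈ S, (f v).2 = v.2
  boo : ∀ v ∈ S, (f v).1.map Prod.snd = v.1.map Prod.snd
  pre : ∀ u ∈ S, ∀ v ∈ S, ∀ j, (List.take j (u.1.map Prod.fst) = List.take j (v.1.map Prod.fst)
    ↔ List.take j ((f u).1.map Prod.fst) = List.take j ((f v).1.map Prod.fst))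

def EmbRel (S T : Finset PV) : Prop := ∃ f, SEmb S T f

lemma EmbRel.refl (S : Finset PV) : EmbRel S S :=
  ⟨id, ⟨fun v hv => hv, fun _ _ _ _ h => h, fun _ _ => rfl, fun _ _ => rfl,
    fun _ _ _ _ _ => Iff.rfl⟩⟩

lemma EmbRel.trans {S T U : Finset PV} (h1 : EmbRel S T) (h2 : EmbRel T U) : EmbRel S U := by
  obtain ⟨f, hf⟩ := h1
  obtain ⟨g, hg⟩ := h2
  refine ⟨g ∘ f, ⟨fun v hv => hg.mem _ (hf.mem v hv), ?_, ?_, ?_, ?_⟩⟩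
  · intro u hu v hv h
    exact hf.inj u hu v hv (hg.inj _ (hf.mem u hu) _ (hf.mem v hv) h)
  · intro v hv
    exact (hg.lab _ (hf.mem v hv)).trans (hf.lab v hv)
  · intro v hv
    exact (hg.boo _ (hf.mem v hv)).trans (hf.boo v hv)
  · intro u hu v hv j
    exact (hf.pre u hu v hv j).trans (hg.pre _ (hf.mem u hu) _ (hf.mem v hv) j)

instance : IsRefl (Finset PV) EmbRel := ⟨EmbRel.refl⟩
instance : IsTrans (Finset PV) EmbRel := ⟨fun _ _ _ => EmbRel.trans⟩
instance : IsPreorder (Finset PV) EmbRel := {}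

/-- key congruence: adjacency only depends on the bool paths and the index coincidence
pattern -/
lemma adjB_congr (p : List (ℕ × Bool)) : ∀ (q p' q' : List (ℕ × Bool)),
    p'.map Prod.snd = p.map Prod.snd → q'.map Prod.snd = q.map Prod.snd →
    p.length = q.length →
    (∀ j, List.take j (p.map Prod.fst) = List.take j (q.map Prod.fst)
      ↔ List.take j (p'.map Prod.fst) = List.take j (q'.map Prod.fst)) →
    adjB p q = adjB p' q' := by
  induction p with
  | nil =>
    intro q p' q' hp hq hlen _
    have hq0 : q = [] := List.length_eq_zero_iff.1 hlen.symm
    have hp' : p' = [] := by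
      have := congrArg List.length hp
      simp only [List.length_map, List.length_nil] at this
      exact List.length_eq_zero_iff.1 this
    have hq' : q' = [] := by
      have := congrArg List.length hq
      simp only [hq0, List.length_map, List.length_nil] at this
      exact List.length_eq_zero_iff.1 this
    subst hq0 hp' hq'
    rfl
  | cons hd tl ih =>
    intro q p' q' hp hq hlen hpre
    obtain ⟨i, a⟩ := hd
    cases q with
    | nil => simp at hlen
    | cons hd2 tq =>
      obtain ⟨j, b⟩ := hd2
      cases p' with
      | nil => simp at hp
      | cons hd3 tp' =>
        obtain ⟨i', a'⟩ := hd3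
        cases q' with
        | nil => simp at hq
        | cons hd4 tq' =>
          obtain ⟨j', b'⟩ := hd4
          simp only [List.map_cons, List.cons.injEq] at hp hq
          obtain ⟨ha, hptl⟩ := hp
          obtain ⟨hb, hqtl⟩ := hq
          have hlen' : tl.length = tq.length := by simpa using hlen
          have h1 := hpre 1
          simp only [List.map_cons, List.take_cons, List.take_zero, List.cons.injEq,
            and_true, List.take_succ_cons] at h1
          have hiff : (i = j) ↔ (i' = j') := by
            simpa using h1
          by_cases hij : i = j
          · have hij' : i' = j' := hiff.1 hij
            simp only [adjB, if_pos hij, if_pos hij', ha, hb]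
            congr 1
            refine ih tq tp' tq' hptl hqtl hlen' ?_
            intro j0
            have := hpre (j0 + 1)
            simp only [List.map_cons, List.take_succ_cons, List.cons.injEq, hij, hij',
              true_and] at this
            exact this
          · have hij' : ¬ (i' = j') := fun h => hij (hiff.2 h)
            simp only [adjB, if_neg hij, if_neg hij', ha, hb]

/-- a structured embedding induces a graph embedding of canonical graphs -/
lemma semb_to_graph {k m : ℕ} {S T : Finset PV} (hS : Valid k m S) (_hT : Valid k m T)
    {f : PV → PV} (hf : SEmb S T f) : Nonempty (CG S ↪g CG T) := by
  refine ⟨⟨⟨fun v => ⟨f v.1, hf.mem v.1 v.2⟩, ?_⟩, ?_⟩⟩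
  · intro u v h
    exact Subtype.ext (hf.inj u.1 u.2 v.1 v.2 (congrArg Subtype.val h))
  · intro u v
    simp only [CG, Function.Embedding.coeFn_mk, ne_eq, Subtype.mk.injEq]
    have hadj : adjB u.1.1 v.1.1 = adjB (f u.1).1 (f v.1).1 := by
      refine adjB_congr u.1.1 v.1.1 (f u.1).1 (f v.1).1 (hf.boo u.1 u.2) (hf.boo v.1 v.2)
        ?_ (hf.pre u.1 u.2 v.1 v.2)
      rw [hS.lenp u.1 u.2, hS.lenp v.1 v.2]
    have hne : f u.1 = f v.1 ↔ u = v :=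
      ⟨fun h => Subtype.ext (hf.inj u.1 u.2 v.1 v.2 h), fun h => by rw [h]⟩
    show (¬ (⟨f u.1, hf.mem _ u.2⟩ : {x // x ∈ T}) = ⟨f v.1, hf.mem _ v.2⟩ ∧
      adjB (f u.1).1 (f v.1).1 = true) ↔ ¬u = v ∧ adjB u.1.1 v.1.1 = true
    rw [Subtype.mk.injEq, hadj, hne]

def headIdx (v : PV) : ℕ := v.1.headI.1
def headB (v : PV) : Bool := v.1.headI.2
def tailv (v : PV) : PV := (v.1.tail, v.1.headI.2 :: v.2)

def comp (S : Finset PV) (i : ℕ) : Finset PV :=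
  (S.filter (fun v => headIdx v = i)).image tailv

def heads (S : Finset PV) : Finset ℕ := S.image headIdx

def compList (S : Finset PV) : List (Finset PV) := ((heads S).sort (· ≤ ·)).map (comp S)

lemma path_decomp {v : PV} (h : v.1 ≠ []) : v.1 = (headIdx v, headB v) :: v.1.tail := by
  rcases v with ⟨p, w⟩
  cases p with
  | nil => exact absurd rfl h
  | cons hd tlp => simp [headIdx, headB]

lemma mem_comp {S : Finset PV} {i : ℕ} {v' : PV} :
    v' ∈ comp S i ↔ ∃ v, v ∈ S ∧ headIdx v = i ∧ tailv v = v' := by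
  simp only [comp, Finset.mem_image, Finset.mem_filter, and_assoc]

lemma valid_ne_nil {k m : ℕ} {S : Finset PV} (hS : Valid (k+1) m S) {v : PV} (hv : v ∈ S) :
    v.1 ≠ [] := by
  have := hS.lenp v hv
  intro h
  rw [h] at this
  simp at this

lemma comp_valid {k m : ℕ} {S : Finset PV} (hS : Valid (k+1) m S) {i : ℕ}
    (hi : i ∈ heads S) : Valid k (m+1) (comp S i) := by
  constructor
  · obtain ⟨v, hv, hvi⟩ := Finset.mem_image.1 hi
    exact ⟨tailv v, mem_comp.2 ⟨v, hv, hvi, rfl⟩⟩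
  · intro v' hv'
    obtain ⟨v, hv, _, rfl⟩ := mem_comp.1 hv'
    have := hS.lenp v hv
    have hd := path_decomp (valid_ne_nil hS hv)
    simp only [tailv]
    rw [hd] at this
    simpa using this
  · intro v' hv'
    obtain ⟨v, hv, _, rfl⟩ := mem_comp.1 hv'
    simp [tailv, hS.lenl v hv]
  · intro u' hu' v' hv' hfst
    obtain ⟨u, hu, hui, rfl⟩ := mem_comp.1 hu'
    obtain ⟨v, hv, hvi, rfl⟩ := mem_comp.1 hv'
    have hueq : u = v := by
      refine hS.sep u hu v hv ?_
      rw [path_decomp (valid_ne_nil hS hu), path_decomp (valid_ne_nil hS hv)]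
      simp only [List.map_cons]
      rw [hui, hvi]
      simp only [List.cons.injEq, true_and]
      exact hfst
    rw [hueq]

lemma assemble {k m : ℕ} {S T : Finset PV} (hS : Valid (k+1) m S) (hT : Valid (k+1) m T)
    {σ : ℕ → ℕ} (hinj : ∀ i ∈ heads S, ∀ i' ∈ heads S, σ i = σ i' → i = i')
    (hc : ∀ i ∈ heads S, EmbRel (comp S i) (comp T (σ i))) : EmbRel S T := by
  classical
  set fI : ℕ → PV → PV := fun i => if h : i ∈ heads S then (hc i h).choose else id with hfI
  have spec : ∀ i (h : i ∈ heads S), SEmb (comp S i) (comp T (σ i)) (fI i) := by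
    intro i h
    rw [hfI]
    simp only [dif_pos h]
    exact (hc i h).choose_spec
  set F : PV → PV := fun v => ((σ (headIdx v), headB v) :: (fI (headIdx v) (tailv v)).1, v.2)
    with hF
  have hhead : ∀ v ∈ S, headIdx v ∈ heads S := fun v hv => Finset.mem_image_of_mem _ hv
  have htv : ∀ v ∈ S, tailv v ∈ comp S (headIdx v) := fun v hv =>
    Finset.mem_image_of_mem _ (Finset.mem_filter.2 ⟨hv, rfl⟩)
  -- the image analysis
  have himg : ∀ v ∈ S, F v ∈ T := by
    intro v hv
    have hu' := (spec _ (hhead v hv)).mem _ (htv v hv)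
    obtain ⟨t, ht, hti, htt⟩ := mem_comp.1 hu'
    have hlab := (spec _ (hhead v hv)).lab _ (htv v hv)
    -- tailv t = fI (headIdx v) (tailv v)
    have ht2 : headB t :: t.2 = headB v :: v.2 := by
      have : (tailv t).2 = (tailv v).2 := htt.symm ▸ hlab
      simpa [tailv, headB] using this
    have hFt : F v = t := by
      rw [hF]
      have hdt := path_decomp (valid_ne_nil hT ht)
      have h1 : (fI (headIdx v) (tailv v)).1 = t.1.tail := by
        rw [← htt]; rfl
      have hbt : headB t = headB v := by simpa using congrArg (·.headI) ht2
      have hlt : t.2 = v.2 := by simpa using congrArg (·.tail) ht2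
      have : t = ((headIdx t, headB t) :: t.1.tail, t.2) := by
        exact Prod.ext hdt rfl
      rw [this]
      simp only [Prod.mk.injEq]
      exact ⟨by rw [h1, hti, hbt], hlt.symm⟩
    rw [hFt]; exact ht
  refine ⟨F, ⟨himg, ?_, fun v _ => rfl, ?_, ?_⟩⟩
  · -- injectivity
    intro u hu v hv heq
    rw [hF] at heq
    simp only [Prod.mk.injEq, List.cons.injEq] at heq
    obtain ⟨⟨⟨hσ, hB⟩, hrest⟩, hlab2⟩ := heq
    have hidx : headIdx u = headIdx v := hinj _ (hhead u hu) _ (hhead v hv) hσ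
    have hfieq : fI (headIdx u) (tailv u) = fI (headIdx u) (tailv v) := by
      refine Prod.ext ?_ ?_
      · rw [hrest, hidx]
      · rw [(spec _ (hhead u hu)).lab _ (htv u hu)]
        have h2 := (spec _ (hhead v hv)).lab _ (htv v hv)
        rw [hidx, h2]
        simp only [tailv, headB] at *
        rw [hB, hlab2]
    have htveq : tailv u = tailv v :=
      (spec _ (hhead u hu)).inj _ (htv u hu) _ (hidx ▸ htv v hv) hfieq
    have h1 : u.1 = v.1 := by
      rw [path_decomp (valid_ne_nil hS hu), path_decomp (valid_ne_nil hS hv), hidx, hB]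
      have : u.1.tail = v.1.tail := by
        simpa [tailv] using congrArg Prod.fst htveq
      rw [this]
    exact Prod.ext h1 hlab2
  · -- bool path preservation
    intro v hv
    rw [hF]
    have hboo := (spec _ (hhead v hv)).boo _ (htv v hv)
    conv_rhs => rw [path_decomp (valid_ne_nil hS hv)]
    simp only [List.map_cons]
    rw [hboo]
    rfl
  · -- prefix condition
    intro u hu v hv j
    cases j with
    | zero => simp
    | succ j =>
      rw [hF]
      conv_lhs => rw [path_decomp (valid_ne_nil hS hu), path_decomp (valid_ne_nil hS hv)]
      simp only [List.map_cons, List.take_succ_cons, List.cons.injEq]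
      by_cases hidx : headIdx u = headIdx v
      · have hpre := (spec _ (hhead u hu)).pre _ (htv u hu) _ (hidx ▸ htv v hv) j
        simp only [tailv] at hpre
        rw [hidx]
        simp only [true_and]
        rw [hpre, hidx]
        rfl
      · have : ¬ σ (headIdx u) = σ (headIdx v) := fun h =>
          hidx (hinj _ (hhead u hu) _ (hhead v hv) h)
        simp [hidx, this]

/-- extract an order-preserving positional matching from `SublistForall₂` -/
lemma sublistForall₂_exists_map {α : Type*} {r : α → α → Prop} :
    ∀ {l₁ l₂ : List α}, List.SublistForall₂ r l₁ l₂ →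
      ∃ g : Fin l₁.length → Fin l₂.length, StrictMono g ∧ ∀ t, r (l₁.get t) (l₂.get (g t)) := by
  intro l₁ l₂ h
  induction h with
  | nil => exact ⟨Fin.elim0, fun t => t.elim0, fun t => t.elim0⟩
  | @cons a b la lb hab hsub ih =>
    obtain ⟨g, hg, hr⟩ := ih
    refine ⟨Fin.cases (⟨0, Nat.succ_pos _⟩ : Fin (b :: lb).length) (fun t => (g t).succ), ?_, ?_⟩
    · intro s t hst
      induction s using Fin.cases with
      | zero =>
        induction t using Fin.cases with
        | zero => exact absurd hst (lt_irrefl _)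
        | succ t => exact Fin.succ_pos _
      | succ s =>
        induction t using Fin.cases with
        | zero => exact absurd hst (by simp [Fin.lt_def])
        | succ t => exact Fin.succ_lt_succ_iff.2 (hg (Fin.succ_lt_succ_iff.1 hst))
    · intro t
      induction t using Fin.cases with
      | zero => exact hab
      | succ t => simpa using hr t
  | @cons_right b la lb hsub ih =>
    obtain ⟨g, hg, hr⟩ := ih
    refine ⟨fun t => (g t).succ, fun s t hst => Fin.succ_lt_succ_iff.2 (hg hst), ?_⟩
    intro t
    simpa using hr t

/-- finite basis property of partially well-ordered sets -/
lemma pwo_exists_basis {α : Type*} {s : Set α} {r : α → α → Prop}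
    (h : s.PartiallyWellOrderedOn r) :
    ∃ F : Finset α, ↑F ⊆ s ∧ ∀ x ∈ s, ∃ y ∈ F, r y x := by
  classical
  by_contra hcon
  push_neg at hcon
  have hstep : ∀ F : Finset α, ↑F ⊆ s → ∃ x, x ∈ s ∧ ∀ y ∈ F, ¬ r y x := by
    intro F hF
    obtain ⟨x, hx, hxy⟩ := hcon F hF
    exact ⟨x, hx, fun y hy hr => hxy y hy hr⟩
  let pick : {F : Finset α // ↑F ⊆ s} → α := fun F => (hstep F.1 F.2).choose
  have pick_mem : ∀ F, pick F ∈ s := fun F => (hstep F.1 F.2).choose_spec.1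
  have pick_not : ∀ F, ∀ y ∈ F.1, ¬ r y (pick F) := fun F => (hstep F.1 F.2).choose_spec.2
  let g : ℕ → {F : Finset α // ↑F ⊆ s} := fun n => Nat.rec ⟨∅, by simp⟩
    (fun _ F => ⟨insert (pick F) F.1, by
      intro x hx
      simp only [Finset.coe_insert, Set.mem_insert_iff] at hx
      rcases hx with rfl | hx
      · exact pick_mem F
      · exact F.2 hx⟩) n
  have hg_succ : ∀ n, (g (n+1)).1 = insert (pick (g n)) (g n).1 := fun n => rfl
  have hg_mono : ∀ m n, m ≤ n → (g m).1 ⊆ (g n).1 := by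
    intro m n hmn
    induction n with
    | zero => simpa [Nat.le_zero.1 hmn]
    | succ n ih =>
      rcases Nat.lt_or_ge m (n+1) with h' | h'
      · rw [hg_succ]
        exact (ih (Nat.lt_succ_iff.1 h')).trans (Finset.subset_insert _ _)
      · have : m = n + 1 := le_antisymm hmn h'
        rw [this]
  have hmem : ∀ m n, m < n → pick (g m) ∈ (g n).1 := by
    intro m n hmn
    have : pick (g m) ∈ (g (m+1)).1 := by
      rw [hg_succ]
      exact Finset.mem_insert_self _ _
    exact hg_mono (m+1) n hmn this
  obtain ⟨m, n, hmn, hr⟩ := h (fun n => ⟨pick (g n), pick_mem (g n)⟩)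
  exact pick_not (g n) _ (hmem m n hmn) hr

lemma valid_zero {m : ℕ} {S : Finset PV} (h : Valid 0 m S) :
    ∃ w : List Bool, w.length = m ∧ S = {(([] : List (ℕ × Bool)), w)} := by
  obtain ⟨v, hv⟩ := h.nonempty
  have hv1 : v.1 = [] := List.length_eq_zero_iff.1 (h.lenp v hv)
  have hveq : v = (([] : List (ℕ × Bool)), v.2) := Prod.ext hv1 rfl
  refine ⟨v.2, h.lenl v hv, Finset.eq_singleton_iff_unique_mem.2 ⟨hveq ▸ hv, ?_⟩⟩
  intro u hu
  have := h.sep u hu v hv (by rw [List.length_eq_zero_iff.1 (h.lenp u hu), hv1])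
  rw [this, ← hveq]

theorem pwo_valid : ∀ (k m : ℕ), {S : Finset PV | Valid k m S}.PartiallyWellOrderedOn EmbRel := by
  intro k
  induction k with
  | zero =>
    intro m f'
    obtain ⟨f, hf, rfl⟩ : ∃ f : ℕ → Finset PV, ∃ hf : ∀ n, Valid 0 m (f n),
        f' = fun n => ⟨f n, hf n⟩ := ⟨fun n => (f' n).1, fun n => (f' n).2, rfl⟩
    choose w hwlen hws using fun n => valid_zero (hf n)
    let g : ℕ → (Fin m → Bool) := fun n i => (w n).getD i false
    obtain ⟨a, b, hab, hg⟩ := Finite.exists_ne_map_eq_of_infinite g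
    have key : f a = f b := by
      have hw : w a = w b := by
        apply List.ext_getElem (by rw [hwlen a, hwlen b])
        intro i h1 h2
        have h3 := congrFun hg (⟨i, by rw [← hwlen a]; exact h1⟩ : Fin m)
        simpa [g, List.getD_eq_getElem, h1, h2] using h3
      rw [hws a, hws b, hw]
    rcases lt_trichotomy a b with h | h | h
    · exact ⟨a, b, h, (show EmbRel (f a) (f b) from key ▸ EmbRel.refl _)⟩
    · exact absurd h hab
    · exact ⟨b, a, h, (show EmbRel (f b) (f a) from key ▸ EmbRel.refl _)⟩
  | succ k ih =>
    intro m f'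
    obtain ⟨f, hf, rfl⟩ : ∃ f : ℕ → Finset PV, ∃ hf : ∀ n, Valid (k+1) m (f n),
        f' = fun n => ⟨f n, hf n⟩ := ⟨fun n => (f' n).1, fun n => (f' n).2, rfl⟩
    have hig := Set.PartiallyWellOrderedOn.partiallyWellOrderedOn_sublistForall₂
      (r := EmbRel) (s := {S : Finset PV | Valid k (m+1) S}) (ih (m+1))
    have hcl : ∀ n, ∀ X ∈ compList (f n), X ∈ {S : Finset PV | Valid k (m+1) S} := by
      intro n X hX
      simp only [compList, List.mem_map] at hX
      obtain ⟨i, hi, rfl⟩ := hX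
      exact comp_valid (hf n) ((Finset.mem_sort _).1 hi)
    obtain ⟨a, b, hab, hsl⟩ := hig (fun n => ⟨compList (f n), fun X hX => hcl n X hX⟩)
    obtain ⟨g, hgmono, hgr⟩ := sublistForall₂_exists_map (l₁ := compList (f a)) (l₂ := compList (f b)) hsl
    classical
    set h₁ := (heads (f a)).sort (· ≤ ·) with hh₁
    set h₂ := (heads (f b)).sort (· ≤ ·) with hh₂
    have hla : (compList (f a)).length = h₁.length := by simp [compList, hh₁]
    have hlb : (compList (f b)).length = h₂.length := by simp [compList, hh₂]
    have hidxlt : ∀ i ∈ heads (f a), h₁.idxOf i < (compList (f a)).length := by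
      intro i hi
      rw [hla]
      exact List.idxOf_lt_length_iff.2 ((Finset.mem_sort _).2 hi)
    let σ : ℕ → ℕ := fun i =>
      if h : i ∈ heads (f a) then
        h₂[(g ⟨h₁.idxOf i, hidxlt i h⟩).val]'(by rw [← hlb]; exact (g _).isLt)
      else i
    have hgetA : ∀ (t : Fin (compList (f a)).length),
        (compList (f a)).get t = comp (f a) (h₁[t.val]'(by rw [← hla]; exact t.isLt)) := by
      intro t
      rw [List.get_eq_getElem]
      simp [compList, hh₁, List.get_eq_getElem]
    have hgetB : ∀ (t : Fin (compList (f b)).length),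
        (compList (f b)).get t = comp (f b) (h₂[t.val]'(by rw [← hlb]; exact t.isLt)) := by
      intro t
      rw [List.get_eq_getElem]
      simp [compList, hh₂, List.get_eq_getElem]
    refine ⟨a, b, hab, ?_⟩
    show EmbRel (f a) (f b)
    refine assemble (σ := σ) (hf a) (hf b) ?_ ?_
    · -- injectivity of σ on heads
      intro i hi i' hi' hσ
      simp only [σ, dif_pos hi, dif_pos hi'] at hσ
      have hnd : h₂.Nodup := Finset.sort_nodup _ _
      have heq1 : (g ⟨h₁.idxOf i, hidxlt i hi⟩).val = (g ⟨h₁.idxOf i', hidxlt i' hi'⟩).val :=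
        (List.Nodup.getElem_inj_iff hnd).1 hσ
      have heq2 : h₁.idxOf i = h₁.idxOf i' := by
        have := hgmono.injective (Fin.ext heq1)
        exact congrArg Fin.val this
      have e1 : h₁[h₁.idxOf i]'((hla ▸ hidxlt i hi)) = i :=
        List.getElem_idxOf _
      have e2 : h₁[h₁.idxOf i']'((hla ▸ hidxlt i' hi')) = i' :=
        List.getElem_idxOf _
      rw [← e1, ← e2]
      congr 1
    · intro i hi
      have := hgr ⟨h₁.idxOf i, hidxlt i hi⟩
      rw [hgetA, hgetB] at this
      have e1 : h₁[h₁.idxOf i]'((hla ▸ hidxlt i hi)) = i := List.getElem_idxOf _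
      rw [e1] at this
      simpa only [σ, dif_pos hi] using this

lemma xor_true_iff (A B : Bool) : (xor A B = true) ↔ ¬((A = true) ↔ (B = true)) := by
  cases A <;> cases B <;> simp

lemma adjB_cons_cons (i j : ℕ) (a b : Bool) (p q : List (ℕ × Bool)) :
    adjB ((i,a)::p) ((j,b)::q) = if i = j then xor (adjB p q) (a && b) else a && b := rfl

lemma adjB_reindex (c : ℕ → ℕ) (hc : ∀ x y, c x = c y → x = y) (a b : PV)
    (ha : a.1 ≠ []) (hb : b.1 ≠ []) :
    adjB ((c (headIdx a), headB a) :: a.1.tail) ((c (headIdx b), headB b) :: b.1.tail)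
      = adjB a.1 b.1 := by
  conv_rhs => rw [path_decomp ha, path_decomp hb]
  rw [adjB_cons_cons, adjB_cons_cons]
  by_cases h : headIdx a = headIdx b
  · rw [if_pos h, if_pos (congrArg c h)]
  · rw [if_neg (fun hcc => h (hc _ _ hcc)), if_neg h]

lemma encode : ∀ (k : ℕ) (V : Type) (G : SimpleGraph V), SCk k V G →
    ∃ S : Finset PV, Valid k 0 S ∧ Nonempty (G ≃g CG S) := by
  intro k
  induction k with
  | zero =>
    intro V G hG
    obtain ⟨e⟩ := hG
    set S : Finset PV := {(([] : List (ℕ × Bool)), ([] : List Bool))} with hSdef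
    have hmem : (([] : List (ℕ × Bool)), ([] : List Bool)) ∈ S := Finset.mem_singleton_self _
    refine ⟨S, ⟨⟨_, hmem⟩, ?_, ?_, ?_⟩, ?_⟩
    · intro v hv
      rw [Finset.mem_singleton.1 hv]
      rfl
    · intro v hv
      rw [Finset.mem_singleton.1 hv]
      rfl
    · intro u hu v hv _
      rw [Finset.mem_singleton.1 hu, Finset.mem_singleton.1 hv]
    · refine ⟨e.trans ⟨⟨fun _ => ⟨_, hmem⟩, fun _ => (), fun _ => rfl,
        fun s => Subtype.ext (Finset.mem_singleton.1 s.2).symm⟩, ?_⟩⟩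
      intro u v
      simp only [CG, Equiv.coe_fn_mk, ne_eq, not_true_eq_false, false_and]
      simp [SimpleGraph.bot_adj]
  | succ k ih =>
    intro V G hG
    obtain ⟨W, H, X, hD, ⟨e⟩⟩ := hG
    have inner : ∀ (W : Type) (H : SimpleGraph W), DSum (SCk k) W H → ∀ X : Set W,
        ∃ S : Finset PV, Valid (k+1) 0 S ∧ ∃ e : flipWithin H X ≃g CG S,
          ∀ w : W, (headB ((e w : {v : PV // v ∈ S}) : PV) = true ↔ w ∈ X) := by
      clear hD X e W H
      intro W H hD
      induction hD with
      | @of W₀ H₀ hQ =>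
        obtain ⟨S₀, hS₀, ⟨e₀⟩⟩ := ih _ _ hQ
        intro X
        classical
        set χ : W₀ → Bool := fun w => decide (w ∈ X) with hχ
        set t : W₀ → PV := fun w => (((0, χ w) :: ((e₀ w : PV).1)), ([] : List Bool))
          with htdef
        set S : Finset PV :=
          S₀.attach.image (fun v => (((0, χ (e₀.symm v)) :: (v : PV).1), ([] : List Bool)))
          with hSdef
        have ht : ∀ w, t w ∈ S := by
          intro w
          refine Finset.mem_image.2 ⟨e₀ w, Finset.mem_attach _ _, ?_⟩
          rw [e₀.symm_apply_apply]
        have htinj : ∀ w w', t w = t w' → w = w' := by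
          intro w w' hww
          simp only [htdef, Prod.mk.injEq, List.cons.injEq] at hww
          have := hS₀.sep _ (e₀ w).2 _ (e₀ w').2 (congrArg (List.map Prod.fst) hww.1.2)
          exact e₀.injective (Subtype.ext this)
        have hsurj : ∀ s : {v : PV // v ∈ S}, ∃ w, t w = s.val := by
          rintro ⟨sv, hs⟩
          obtain ⟨v, _, hvs⟩ := Finset.mem_image.1 hs
          refine ⟨e₀.symm v, ?_⟩
          simp only [htdef]
          rw [e₀.apply_symm_apply]
          exact hvs
        have hbij : Function.Bijective (fun w => (⟨t w, ht w⟩ : {v : PV // v ∈ S})) := by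
          constructor
          · intro w w' hww
            exact htinj w w' (congrArg Subtype.val hww)
          · intro s
            obtain ⟨w, hw⟩ := hsurj s
            exact ⟨w, Subtype.ext hw⟩
        have hSne : S.Nonempty := (Finset.attach_nonempty_iff.2 hS₀.nonempty).image _
        refine ⟨S, ⟨hSne, ?_, ?_, ?_⟩, ⟨Equiv.ofBijective _ hbij, ?_⟩, ?_⟩
        · intro v' hv'
          obtain ⟨v, -, rfl⟩ := Finset.mem_image.1 hv'
          simp [hS₀.lenp v.1 v.2]
        · intro v' hv'
          obtain ⟨v, -, rfl⟩ := Finset.mem_image.1 hv'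
          rfl
        · intro u' hu' v' hv' hfst
          obtain ⟨u, -, rfl⟩ := Finset.mem_image.1 hu'
          obtain ⟨v, -, rfl⟩ := Finset.mem_image.1 hv'
          simp only [List.map_cons, List.cons.injEq] at hfst
          have := hS₀.sep u.1 u.2 v.1 v.2 hfst.2
          have huv : u = v := Subtype.ext this
          rw [huv]
        · -- map_rel_iff'
          intro w w'
          show ((⟨t w, ht w⟩ : {v : PV // v ∈ S}) ≠ ⟨t w', ht w'⟩
              ∧ adjB (t w).1 (t w').1 = true) ↔ (flipWithin H₀ X).Adj w w'
          by_cases hww : w = w'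
          · subst hww
            exact iff_of_false (fun h => h.1 rfl) ((flipWithin H₀ X).loopless.irrefl _)
          · have hfst : (⟨t w, ht w⟩ : {v : PV // v ∈ S}) ≠ ⟨t w', ht w'⟩ := by
              intro hc
              exact hww (htinj _ _ (congrArg Subtype.val hc))
            have hH : H₀.Adj w w' ↔ adjB (e₀ w : PV).1 (e₀ w' : PV).1 = true := by
              rw [← e₀.map_rel_iff]
              exact ⟨fun h => h.2, fun h => ⟨fun hc => hww (e₀.injective hc), h⟩⟩
            have hadj : adjB (t w).1 (t w').1
                = xor (adjB (e₀ w : PV).1 (e₀ w' : PV).1) (χ w && χ w') := by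
              simp [htdef, adjB_cons_cons]
            have hb : ((χ w && χ w') = true) ↔ (w ∈ X ∧ w' ∈ X) := by
              simp [hχ]
            show _ ↔ (w ≠ w' ∧ ¬(H₀.Adj w w' ↔ (w ∈ X ∧ w' ∈ X)))
            rw [hadj, xor_true_iff, hb, ← hH]
            exact and_congr (iff_of_true hfst hww) Iff.rfl
        · intro w
          show headB (t w) = true ↔ w ∈ X
          simp [headB, htdef, hχ]
      | @union W₁ W₂ H₁ H₂ hD1 hD2 ih1 ih2 =>
        intro X
        obtain ⟨S₁, hS₁, e₁, hb₁⟩ := ih1 {v | Sum.inl v ∈ X}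
        obtain ⟨S₂, hS₂, e₂, hb₂⟩ := ih2 {v | Sum.inr v ∈ X}
        classical
        set r₁ : PV → PV := fun v => (((2 * headIdx v, headB v) :: v.1.tail), v.2) with hr₁
        set r₂ : PV → PV := fun v => (((2 * headIdx v + 1, headB v) :: v.1.tail), v.2) with hr₂
        set S : Finset PV := S₁.image r₁ ∪ S₂.image r₂ with hSdef
        have hmem₁ : ∀ w, r₁ ((e₁ w : PV)) ∈ S := fun w =>
          Finset.mem_union_left _ (Finset.mem_image_of_mem _ (e₁ w).2)
        have hmem₂ : ∀ w, r₂ ((e₂ w : PV)) ∈ S := fun w =>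
          Finset.mem_union_right _ (Finset.mem_image_of_mem _ (e₂ w).2)
        have hr₁inj : ∀ u ∈ S₁, ∀ v ∈ S₁, r₁ u = r₁ v → u = v := by
          intro u hu v hv h
          simp only [hr₁, Prod.mk.injEq, List.cons.injEq] at h
          refine Prod.ext ?_ h.2
          rw [path_decomp (valid_ne_nil hS₁ hu), path_decomp (valid_ne_nil hS₁ hv),
            h.1.2, h.1.1.2]
          have : headIdx u = headIdx v := by omega
          rw [this]
        have hr₂inj : ∀ u ∈ S₂, ∀ v ∈ S₂, r₂ u = r₂ v → u = v := by
          intro u hu v hv h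
          simp only [hr₂, Prod.mk.injEq, List.cons.injEq] at h
          refine Prod.ext ?_ h.2
          rw [path_decomp (valid_ne_nil hS₂ hu), path_decomp (valid_ne_nil hS₂ hv),
            h.1.2, h.1.1.2]
          have : headIdx u = headIdx v := by omega
          rw [this]
        have hcross : ∀ u v : PV, r₁ u ≠ r₂ v := by
          intro u v h
          have := congrArg (fun p : PV => p.1.headI.1) h
          simp [hr₁, hr₂] at this
          omega
        set τ : W₁ ⊕ W₂ → {v : PV // v ∈ S} :=
          Sum.elim (fun w => ⟨r₁ ((e₁ w : PV)), hmem₁ w⟩)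
            (fun w => ⟨r₂ ((e₂ w : PV)), hmem₂ w⟩) with hτ
        have hτinj : Function.Injective τ := by
          rintro (w | w) (w' | w') h <;> simp only [hτ, Sum.elim_inl, Sum.elim_inr,
            Subtype.mk.injEq] at h
          · exact congrArg Sum.inl (e₁.injective (Subtype.ext
              (hr₁inj _ (e₁ w).2 _ (e₁ w').2 h)))
          · exact absurd h (hcross _ _)
          · exact absurd h.symm (hcross _ _)
          · exact congrArg Sum.inr (e₂.injective (Subtype.ext
              (hr₂inj _ (e₂ w).2 _ (e₂ w').2 h)))
        have hτsurj : Function.Surjective τ := by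
          rintro ⟨sv, hs⟩
          rcases Finset.mem_union.1 hs with hs' | hs'
          · obtain ⟨v, hv, rfl⟩ := Finset.mem_image.1 hs'
            refine ⟨Sum.inl (e₁.symm ⟨v, hv⟩), ?_⟩
            simp only [hτ, Sum.elim_inl]
            congr 1
            rw [e₁.apply_symm_apply]
          · obtain ⟨v, hv, rfl⟩ := Finset.mem_image.1 hs'
            refine ⟨Sum.inr (e₂.symm ⟨v, hv⟩), ?_⟩
            simp only [hτ, Sum.elim_inr]
            congr 1
            rw [e₂.apply_symm_apply]
        have hSne : S.Nonempty := by
          obtain ⟨v, hv⟩ := hS₁.nonempty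
          exact ⟨r₁ v, Finset.mem_union_left _ (Finset.mem_image_of_mem _ hv)⟩
        refine ⟨S, ⟨hSne, ?_, ?_, ?_⟩, ⟨Equiv.ofBijective τ ⟨hτinj, hτsurj⟩, ?_⟩, ?_⟩
        · -- path lengths
          intro v' hv'
          rcases Finset.mem_union.1 hv' with hs' | hs' <;>
            obtain ⟨v, hv, rfl⟩ := Finset.mem_image.1 hs'
          · have := hS₁.lenp v hv
            simp only [hr₁, List.length_cons, List.length_tail]
            omega
          · have := hS₂.lenp v hv
            simp only [hr₂, List.length_cons, List.length_tail]
            omega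
        · -- label lengths
          intro v' hv'
          rcases Finset.mem_union.1 hv' with hs' | hs' <;>
            obtain ⟨v, hv, rfl⟩ := Finset.mem_image.1 hs'
          · exact hS₁.lenl v hv
          · exact hS₂.lenl v hv
        · -- separation
          intro u' hu' v' hv' hfst
          rcases Finset.mem_union.1 hu' with hu'' | hu'' <;>
            rcases Finset.mem_union.1 hv' with hv'' | hv'' <;>
            obtain ⟨u, hu, rfl⟩ := Finset.mem_image.1 hu'' <;>
            obtain ⟨v, hv, rfl⟩ := Finset.mem_image.1 hv''
          · simp only [hr₁, List.map_cons, List.cons.injEq] at hfst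
            have huv : u = v := by
              refine hS₁.sep u hu v hv ?_
              rw [path_decomp (valid_ne_nil hS₁ hu), path_decomp (valid_ne_nil hS₁ hv)]
              simp only [List.map_cons]
              have : headIdx u = headIdx v := by omega
              rw [this, hfst.2]
            rw [huv]
          · simp only [hr₁, hr₂, List.map_cons, List.cons.injEq] at hfst
            omega
          · simp only [hr₁, hr₂, List.map_cons, List.cons.injEq] at hfst
            omega
          · simp only [hr₂, List.map_cons, List.cons.injEq] at hfst
            have huv : u = v := by
              refine hS₂.sep u hu v hv ?_
              rw [path_decomp (valid_ne_nil hS₂ hu), path_decomp (valid_ne_nil hS₂ hv)]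
              simp only [List.map_cons]
              have : headIdx u = headIdx v := by omega
              rw [this, hfst.2]
            rw [huv]
        · -- map_rel_iff'
          rintro (w | w) (w' | w')
          · show ((τ (Sum.inl w) ≠ τ (Sum.inl w')) ∧
              adjB (r₁ ((e₁ w : PV))).1 (r₁ ((e₁ w' : PV))).1 = true) ↔ _
            have hab : adjB (r₁ ((e₁ w : PV))).1 (r₁ ((e₁ w' : PV))).1
                = adjB (e₁ w : PV).1 (e₁ w' : PV).1 :=
              adjB_reindex (fun x => 2 * x) (fun x y h => by omega) _ _
                (valid_ne_nil hS₁ (e₁ w).2) (valid_ne_nil hS₁ (e₁ w').2)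
            have hne : (τ (Sum.inl w) ≠ τ (Sum.inl w')) ↔ (e₁ w ≠ e₁ w') := by
              constructor
              · intro h hc
                exact h (Subtype.ext (congrArg (fun z : {v : PV // v ∈ S₁} => r₁ (z : PV)) hc))
              · intro h hc
                exact h (Subtype.ext (hr₁inj _ (e₁ w).2 _ (e₁ w').2
                  (by simpa [hτ] using congrArg Subtype.val hc)))
            rw [hab, hne]
            have : ((e₁ w ≠ e₁ w') ∧ adjB (e₁ w : PV).1 (e₁ w' : PV).1 = true)
                ↔ (flipWithin H₁ {v | Sum.inl v ∈ X}).Adj w w' := e₁.map_rel_iff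
            rw [this]
            show (w ≠ w' ∧ ¬(H₁.Adj w w' ↔ (Sum.inl w ∈ X ∧ Sum.inl w' ∈ X))) ↔
              (Sum.inl w ≠ Sum.inl w' ∧
                ¬((H₁ ⊕g H₂).Adj (Sum.inl w) (Sum.inl w') ↔
                  (Sum.inl w ∈ X ∧ Sum.inl w' ∈ X)))
            simp [SimpleGraph.sum_adj]
          · show ((τ (Sum.inl w) ≠ τ (Sum.inr w')) ∧
              adjB (r₁ ((e₁ w : PV))).1 (r₂ ((e₂ w' : PV))).1 = true) ↔ _
            have hne : τ (Sum.inl w) ≠ τ (Sum.inr w') := by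
              intro hc
              exact hcross _ _ (by simpa [hτ] using congrArg Subtype.val hc)
            have hab : adjB (r₁ ((e₁ w : PV))).1 (r₂ ((e₂ w' : PV))).1
                = (headB (e₁ w : PV) && headB (e₂ w' : PV)) := by
              simp only [hr₁, hr₂, adjB_cons_cons]
              rw [if_neg (by omega)]
            rw [hab]
            show _ ↔ (Sum.inl w ≠ Sum.inr w' ∧
              ¬((H₁ ⊕g H₂).Adj (Sum.inl w) (Sum.inr w') ↔
                (Sum.inl w ∈ X ∧ Sum.inr w' ∈ X)))
            have h1 := hb₁ w
            have h2 := hb₂ w'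
            simp only [Set.mem_setOf_eq] at h1 h2
            constructor
            · rintro ⟨-, hadj⟩
              rw [Bool.and_eq_true] at hadj
              refine ⟨Sum.inl_ne_inr, ?_⟩
              have hfalse : ¬ (H₁ ⊕g H₂).Adj (Sum.inl w) (Sum.inr w') := by simp
              intro hiff
              exact hfalse (hiff.2 ⟨h1.1 hadj.1, h2.1 hadj.2⟩)
            · rintro ⟨-, hflip⟩
              refine ⟨hne, ?_⟩
              rw [Bool.and_eq_true]
              have hfalse : ¬ (H₁ ⊕g H₂).Adj (Sum.inl w) (Sum.inr w') := by simp
              have hX : Sum.inl w ∈ X ∧ Sum.inr w' ∈ X := by tauto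
              exact ⟨h1.2 hX.1, h2.2 hX.2⟩
          · show ((τ (Sum.inr w) ≠ τ (Sum.inl w')) ∧
              adjB (r₂ ((e₂ w : PV))).1 (r₁ ((e₁ w' : PV))).1 = true) ↔ _
            have hne : τ (Sum.inr w) ≠ τ (Sum.inl w') := by
              intro hc
              exact hcross _ _ (by simpa [hτ] using (congrArg Subtype.val hc).symm)
            have hab : adjB (r₂ ((e₂ w : PV))).1 (r₁ ((e₁ w' : PV))).1
                = (headB (e₂ w : PV) && headB (e₁ w' : PV)) := by
              simp only [hr₁, hr₂, adjB_cons_cons]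
              rw [if_neg (by omega)]
            rw [hab]
            show _ ↔ (Sum.inr w ≠ Sum.inl w' ∧
              ¬((H₁ ⊕g H₂).Adj (Sum.inr w) (Sum.inl w') ↔
                (Sum.inr w ∈ X ∧ Sum.inl w' ∈ X)))
            have h1 := hb₂ w
            have h2 := hb₁ w'
            simp only [Set.mem_setOf_eq] at h1 h2
            constructor
            · rintro ⟨-, hadj⟩
              rw [Bool.and_eq_true] at hadj
              refine ⟨Sum.inr_ne_inl, ?_⟩
              have hfalse : ¬ (H₁ ⊕g H₂).Adj (Sum.inr w) (Sum.inl w') := by simp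
              intro hiff
              exact hfalse (hiff.2 ⟨h1.1 hadj.1, h2.1 hadj.2⟩)
            · rintro ⟨-, hflip⟩
              refine ⟨hne, ?_⟩
              rw [Bool.and_eq_true]
              have hfalse : ¬ (H₁ ⊕g H₂).Adj (Sum.inr w) (Sum.inl w') := by simp
              have hX : Sum.inr w ∈ X ∧ Sum.inl w' ∈ X := by tauto
              exact ⟨h1.2 hX.1, h2.2 hX.2⟩
          · show ((τ (Sum.inr w) ≠ τ (Sum.inr w')) ∧
              adjB (r₂ ((e₂ w : PV))).1 (r₂ ((e₂ w' : PV))).1 = true) ↔ _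
            have hab : adjB (r₂ ((e₂ w : PV))).1 (r₂ ((e₂ w' : PV))).1
                = adjB (e₂ w : PV).1 (e₂ w' : PV).1 :=
              adjB_reindex (fun x => 2 * x + 1) (fun x y h => by omega) _ _
                (valid_ne_nil hS₂ (e₂ w).2) (valid_ne_nil hS₂ (e₂ w').2)
            have hne : (τ (Sum.inr w) ≠ τ (Sum.inr w')) ↔ (e₂ w ≠ e₂ w') := by
              constructor
              · intro h hc
                exact h (Subtype.ext (congrArg (fun z : {v : PV // v ∈ S₂} => r₂ (z : PV)) hc))
              · intro h hc
                exact h (Subtype.ext (hr₂inj _ (e₂ w).2 _ (e₂ w').2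
                  (by simpa [hτ] using congrArg Subtype.val hc)))
            rw [hab, hne]
            have : ((e₂ w ≠ e₂ w') ∧ adjB (e₂ w : PV).1 (e₂ w' : PV).1 = true)
                ↔ (flipWithin H₂ {v | Sum.inr v ∈ X}).Adj w w' := e₂.map_rel_iff
            rw [this]
            show (w ≠ w' ∧ ¬(H₂.Adj w w' ↔ (Sum.inr w ∈ X ∧ Sum.inr w' ∈ X))) ↔
              (Sum.inr w ≠ Sum.inr w' ∧
                ¬((H₁ ⊕g H₂).Adj (Sum.inr w) (Sum.inr w') ↔
                  (Sum.inr w ∈ X ∧ Sum.inr w' ∈ X)))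
            simp [SimpleGraph.sum_adj]
        · -- head bools
          rintro (w | w)
          · show headB (r₁ ((e₁ w : PV))) = true ↔ _
            have := hb₁ w
            simp only [Set.mem_setOf_eq] at this
            simpa [hr₁, headB] using this
          · show headB (r₂ ((e₂ w : PV))) = true ↔ _
            have := hb₂ w
            simp only [Set.mem_setOf_eq] at this
            simpa [hr₂, headB] using this
    obtain ⟨S, hS, e', _⟩ := inner W H hD X
    exact ⟨S, hS, ⟨e.trans e'⟩⟩

open scoped Classical

section Formulas

def andList {n : ℕ} (l : List (Language.graph.BoundedFormula Empty n)) :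
    Language.graph.BoundedFormula Empty n := l.foldr (· ⊓ ·) ⊤

def orList {n : ℕ} (l : List (Language.graph.BoundedFormula Empty n)) :
    Language.graph.BoundedFormula Empty n := l.foldr (· ⊔ ·) ⊥

lemma andList_isQF {n : ℕ} {l : List (Language.graph.BoundedFormula Empty n)}
    (h : ∀ θ ∈ l, θ.IsQF) : (andList l).IsQF := by
  induction l with
  | nil => exact BoundedFormula.IsQF.top
  | cons a l ih =>
    exact (h a (List.mem_cons_self)).inf (ih (fun θ hθ => h θ (List.mem_cons_of_mem _ hθ)))

lemma orList_isQF {n : ℕ} {l : List (Language.graph.BoundedFormula Empty n)}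
    (h : ∀ θ ∈ l, θ.IsQF) : (orList l).IsQF := by
  induction l with
  | nil => exact BoundedFormula.isQF_bot
  | cons a l ih =>
    exact (h a (List.mem_cons_self)).sup (ih (fun θ hθ => h θ (List.mem_cons_of_mem _ hθ)))

variable {V : Type} (G : SimpleGraph V)

lemma realize_andList {n : ℕ} {l : List (Language.graph.BoundedFormula Empty n)}
    {v : Empty → V} {xs : Fin n → V} :
    @BoundedFormula.Realize _ V G.structure _ _ (andList l) v xs
      ↔ ∀ θ ∈ l, @BoundedFormula.Realize _ V G.structure _ _ θ v xs := by
  letI := G.structure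
  induction l with
  | nil => simp [andList]
  | cons a l ih =>
    show (a ⊓ andList l).Realize v xs ↔ _
    rw [BoundedFormula.realize_inf]
    constructor
    · rintro ⟨h1, h2⟩ θ hθ
      rcases List.mem_cons.1 hθ with rfl | hθ
      · exact h1
      · exact ih.1 h2 θ hθ
    · intro hall
      exact ⟨hall a (List.mem_cons_self),
        ih.2 (fun θ hθ => hall θ (List.mem_cons_of_mem _ hθ))⟩

lemma realize_orList {n : ℕ} {l : List (Language.graph.BoundedFormula Empty n)}
    {v : Empty → V} {xs : Fin n → V} :
    @BoundedFormula.Realize _ V G.structure _ _ (orList l) v xs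
      ↔ ∃ θ ∈ l, @BoundedFormula.Realize _ V G.structure _ _ θ v xs := by
  letI := G.structure
  induction l with
  | nil => simp [orList]
  | cons a l ih =>
    show (a ⊔ orList l).Realize v xs ↔ _
    rw [BoundedFormula.realize_sup]
    constructor
    · rintro (h1 | h2)
      · exact ⟨a, List.mem_cons_self, h1⟩
      · obtain ⟨θ, hθ, hr⟩ := ih.1 h2
        exact ⟨θ, List.mem_cons_of_mem _ hθ, hr⟩
    · rintro ⟨θ, hθ, hr⟩
      rcases List.mem_cons.1 hθ with rfl | hθ
      · exact Or.inl hr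
      · exact Or.inr (ih.2 ⟨θ, hθ, hr⟩)

lemma relMap_adj (x y : V) :
    @Structure.RelMap Language.graph V G.structure 2 adj ![x, y] ↔ G.Adj x y :=
  Iff.rfl

/-- an enumeration of a finite canonical set -/
noncomputable def enum (S : Finset PV) : {v : PV // v ∈ S} ≃ Fin S.card :=
  Fintype.equivFinOfCardEq (Fintype.card_coe S)

/-- the existential diagram of the canonical graph on `S`, with `N` variables -/
noncomputable def diag (S : Finset PV) (N : ℕ) (h : S.card ≤ N) :
    Language.graph.BoundedFormula Empty N :=
  andList (((List.finRange S.card).product (List.finRange S.card)).map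
    (fun ij =>
      if ij.1 = ij.2 then ⊤
      else
        (∼((Language.Term.var (Sum.inr (Fin.castLE h ij.1))).bdEqual
            (Language.Term.var (Sum.inr (Fin.castLE h ij.2))))) ⊓
        (if (CG S).Adj ((enum S).symm ij.1) ((enum S).symm ij.2)
          then adj.boundedFormula₂ (Language.Term.var (Sum.inr (Fin.castLE h ij.1)))
            (Language.Term.var (Sum.inr (Fin.castLE h ij.2)))
          else ∼(adj.boundedFormula₂ (Language.Term.var (Sum.inr (Fin.castLE h ij.1)))
            (Language.Term.var (Sum.inr (Fin.castLE h ij.2)))))))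

lemma diag_isQF (S : Finset PV) (N : ℕ) (h : S.card ≤ N) : (diag S N h).IsQF := by
  refine andList_isQF ?_
  intro θ hθ
  simp only [List.mem_map] at hθ
  obtain ⟨ij, _, rfl⟩ := hθ
  by_cases hij : ij.1 = ij.2
  · rw [if_pos hij]
    exact BoundedFormula.IsQF.top
  · rw [if_neg hij]
    refine BoundedFormula.IsQF.inf ((BoundedFormula.IsAtomic.equal _ _).isQF.not) ?_
    by_cases hadj : (CG S).Adj ((enum S).symm ij.1) ((enum S).symm ij.2)
    · rw [if_pos hadj]
      exact (BoundedFormula.IsAtomic.rel _ _).isQF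
    · rw [if_neg hadj]
      exact (BoundedFormula.IsAtomic.rel _ _).isQF.not

lemma realize_diag_iff {S : Finset PV} {N : ℕ} (h : S.card ≤ N) {xs : Fin N → V}
    {v : Empty → V} :
    @BoundedFormula.Realize _ V G.structure _ _ (diag S N h) v xs ↔
      (∀ i j : Fin S.card, i ≠ j →
        (xs (Fin.castLE h i) ≠ xs (Fin.castLE h j) ∧
          (G.Adj (xs (Fin.castLE h i)) (xs (Fin.castLE h j)) ↔
            (CG S).Adj ((enum S).symm i) ((enum S).symm j)))) := by
  letI := G.structure
  rw [diag, realize_andList]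
  constructor
  · intro hall i j hij
    have hmem : ((i, j) : Fin S.card × Fin S.card) ∈
        (List.finRange S.card).product (List.finRange S.card) := by
      simp [List.pair_mem_product]
    have := hall _ (List.mem_map.2 ⟨(i, j), hmem, rfl⟩)
    rw [if_neg hij] at this
    rw [BoundedFormula.realize_inf] at this
    obtain ⟨h1, h2⟩ := this
    rw [BoundedFormula.realize_not, BoundedFormula.realize_bdEqual] at h1
    simp only [Term.realize_var, Sum.elim_inr] at h1
    refine ⟨h1, ?_⟩
    by_cases hadj : (CG S).Adj ((enum S).symm i) ((enum S).symm j)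
    · rw [if_pos hadj] at h2
      rw [BoundedFormula.realize_rel₂] at h2
      simp only [Term.realize_var, Sum.elim_inr] at h2
      rw [relMap_adj] at h2
      exact iff_of_true h2 hadj
    · rw [if_neg hadj] at h2
      rw [BoundedFormula.realize_not, BoundedFormula.realize_rel₂] at h2
      simp only [Term.realize_var, Sum.elim_inr] at h2
      rw [relMap_adj] at h2
      exact iff_of_false h2 hadj
  · intro hall θ hθ
    simp only [List.mem_map] at hθ
    obtain ⟨ij, _, rfl⟩ := hθ
    by_cases hij : ij.1 = ij.2
    · rw [if_pos hij]
      exact BoundedFormula.realize_top.2 trivial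
    · rw [if_neg hij]
      obtain ⟨h1, h2⟩ := hall ij.1 ij.2 hij
      rw [BoundedFormula.realize_inf]
      constructor
      · rw [BoundedFormula.realize_not, BoundedFormula.realize_bdEqual]
        simpa using h1
      · by_cases hadj : (CG S).Adj ((enum S).symm ij.1) ((enum S).symm ij.2)
        · rw [if_pos hadj, BoundedFormula.realize_rel₂]
          simp only [Term.realize_var, Sum.elim_inr]
          rw [relMap_adj]
          exact h2.2 hadj
        · rw [if_neg hadj, BoundedFormula.realize_not, BoundedFormula.realize_rel₂]
          simp only [Term.realize_var, Sum.elim_inr]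
          rw [relMap_adj]
          exact fun hc => hadj (h2.1 hc)

/-- realization of the diagram yields an embedding of the canonical graph -/
lemma diag_to_embedding {S : Finset PV} {N : ℕ} (h : S.card ≤ N) {xs : Fin N → V}
    {v : Empty → V}
    (hr : @BoundedFormula.Realize _ V G.structure _ _ (diag S N h) v xs) :
    Nonempty (CG S ↪g G) := by
  rw [realize_diag_iff] at hr
  refine ⟨⟨⟨fun s => xs (Fin.castLE h (enum S s)), ?_⟩, ?_⟩⟩
  · intro s t hst
    by_contra hne
    have hij : enum S s ≠ enum S t := fun hc => hne ((enum S).injective hc)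
    exact (hr _ _ hij).1 hst
  · intro s t
    by_cases hst : s = t
    · subst hst
      show G.Adj (xs (Fin.castLE h (enum S s))) (xs (Fin.castLE h (enum S s))) ↔ (CG S).Adj s s
      exact iff_of_false (G.loopless.irrefl _) ((CG S).loopless.irrefl _)
    · have hij : enum S s ≠ enum S t := fun hc => hst ((enum S).injective hc)
      have := (hr _ _ hij).2
      show G.Adj (xs (Fin.castLE h (enum S s))) (xs (Fin.castLE h (enum S t))) ↔ (CG S).Adj s t
      rw [this, (enum S).symm_apply_apply, (enum S).symm_apply_apply]

/-- an embedding of the canonical graph yields a realization of the diagram -/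
lemma embedding_to_diag {S : Finset PV} {N : ℕ} (h : S.card ≤ N) (hne : S.Nonempty)
    (emb : CG S ↪g G) {v : Empty → V} :
    ∃ xs : Fin N → V, @BoundedFormula.Realize _ V G.structure _ _ (diag S N h) v xs := by
  have hpos : 0 < S.card := Finset.card_pos.2 hne
  refine ⟨fun i => if h' : i.1 < S.card then emb ((enum S).symm ⟨i.1, h'⟩)
    else emb ((enum S).symm ⟨0, hpos⟩), ?_⟩
  rw [realize_diag_iff]
  intro i j hij
  have hi : (Fin.castLE h i).1 < S.card := i.isLt
  have hj : (Fin.castLE h j).1 < S.card := j.isLt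
  rw [dif_pos hi, dif_pos hj]
  have hi' : (⟨(Fin.castLE h i).1, hi⟩ : Fin S.card) = i := Fin.ext rfl
  have hj' : (⟨(Fin.castLE h j).1, hj⟩ : Fin S.card) = j := Fin.ext rfl
  rw [hi', hj']
  constructor
  · intro hc
    have := emb.injective hc
    exact hij (by
      have := congrArg (enum S) this
      simpa using this)
  · exact emb.map_adj_iff
end Formulas

lemma gsat_exs {V : Type} (G : SimpleGraph V) {n : ℕ}
    (θ : Language.graph.BoundedFormula Empty n) :
    GSat G θ.exs ↔ ∃ xs : Fin n → V,
      @BoundedFormula.Realize _ V G.structure _ _ θ default xs := by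
  letI := G.structure
  exact BoundedFormula.realize_exs

lemma sck_finite {k : ℕ} {V : Type} {G : SimpleGraph V} (hG : SCk k V G) : Finite V := by
  obtain ⟨S, _, ⟨e⟩⟩ := encode k V G hG
  exact Finite.of_equiv _ e.toEquiv.symm

end SCAux

theorem stmt_16' (k : ℕ) (φ : Language.graph.Sentence)
    (hpres : ∀ (V W : Type) [Fintype V] [Fintype W] (G : SimpleGraph V) (H : SimpleGraph W),
      SCk k V G → SCk k W H → (G ↪g H) → GSat G φ → GSat H φ) :
    ∃ ψ : Language.graph.Sentence, IsExistentialSentence ψ ∧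
      ∀ (V : Type) [Fintype V] (G : SimpleGraph V),
        SCk k V G → (GSat G φ ↔ GSat G ψ) := by
  classical
  set U : Set (Finset SCAux.PV) := {S | SCAux.Valid k 0 S ∧ ∃ (V₀ : Type) (G₀ : SimpleGraph V₀),
    SCk k V₀ G₀ ∧ GSat G₀ φ ∧ Nonempty (G₀ ≃g SCAux.CG S)} with hU
  have hUsub : U ⊆ {S | SCAux.Valid k 0 S} := fun S hS => hS.1
  obtain ⟨F, hFsub, hFbasis⟩ := SCAux.pwo_exists_basis ((SCAux.pwo_valid k 0).mono hUsub)
  set N : ℕ := F.sup Finset.card with hN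
  set θall : Language.graph.BoundedFormula Empty N :=
    SCAux.orList ((F.attach.toList).map
      (fun Sh => SCAux.diag Sh.1 N (Finset.le_sup Sh.2))) with hθall
  refine ⟨θall.exs, ⟨N, θall, ?_, rfl⟩, ?_⟩
  · refine SCAux.orList_isQF ?_
    intro θ hθ
    simp only [List.mem_map] at hθ
    obtain ⟨Sh, _, rfl⟩ := hθ
    exact SCAux.diag_isQF _ _ _
  · intro V _ G hG
    obtain ⟨T, hT, ⟨eT⟩⟩ := SCAux.encode k V G hG
    constructor
    · -- φ → ψ
      intro hφ
      have hTU : T ∈ U := ⟨hT, V, G, hG, hφ, ⟨eT⟩⟩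
      obtain ⟨S, hSF, hST⟩ := hFbasis T hTU
      have hSval : SCAux.Valid k 0 S := (hFsub hSF).1
      obtain ⟨f, hf⟩ := hST
      obtain ⟨embST⟩ := SCAux.semb_to_graph hSval hT hf
      have emb : SCAux.CG S ↪g G := embST.trans eT.symm.toEmbedding
      rw [SCAux.gsat_exs]
      obtain ⟨xs, hxs⟩ := SCAux.embedding_to_diag G (Finset.le_sup hSF) hSval.nonempty emb
        (v := default)
      refine ⟨xs, ?_⟩
      rw [hθall, SCAux.realize_orList]
      exact ⟨SCAux.diag S N (Finset.le_sup hSF),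
        List.mem_map.2 ⟨⟨S, hSF⟩, Finset.mem_toList.2 (Finset.mem_attach _ _), rfl⟩, hxs⟩
    · -- ψ → φ
      intro hψ
      rw [SCAux.gsat_exs] at hψ
      obtain ⟨xs, hxs⟩ := hψ
      rw [hθall, SCAux.realize_orList] at hxs
      obtain ⟨θ, hθmem, hθr⟩ := hxs
      simp only [List.mem_map] at hθmem
      obtain ⟨⟨S, hSF⟩, -, rfl⟩ := hθmem
      obtain ⟨emb⟩ := SCAux.diag_to_embedding G (Finset.le_sup hSF) hθr
      obtain ⟨-, V₀, G₀, hG₀, hφ₀, ⟨e₀⟩⟩ := hFsub hSF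
      have emb' : G₀ ↪g G := e₀.toEmbedding.trans emb
      haveI : Finite V₀ := SCAux.sck_finite hG₀
      haveI : Fintype V₀ := Fintype.ofFinite V₀
      exact hpres V₀ V G₀ G hG₀ hG emb' hφ₀

/-- Extension preservation holds over `SC(k)`: every sentence preserved by embeddings over
`SC(k)` is equivalent over `SC(k)` to an existential sentence. -/
theorem stmt_16 (k : ℕ) (φ : Language.graph.Sentence)
    (hpres : ∀ (V W : Type) [Fintype V] [Fintype W] (G : SimpleGraph V) (H : SimpleGraph W),
      SCk k V G → SCk k W H → (G ↪g H) → GSat G φ → GSat H φ) :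
    ∃ ψ : Language.graph.Sentence, IsExistentialSentence ψ ∧
      ∀ (V : Type) [Fintype V] (G : SimpleGraph V),
        SCk k V G → (GSat G φ ↔ GSat G ψ) := stmt_16' k φ hpres
end
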